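/- arXiv:2310.13173 — 6 statements merged into one kernel-verified Lean document; each statement's English description precedes it below -/
import Mathlib

section
/- Let λ > 0 and (w, θ), (w', θ') ∈ ℝ × [−π, π). Then (1/Γ(1/2)) ∫_0^∞ t^{−1/2} e^{−λt} · (4πt)^{−1} e^{−(w−w')²/(4t)} · Σ_{n∈ℤ} e^{−(θ−θ'−2nπ)²/(4t)} dt = (1/2π) Σ_{n∈ℤ} ρ_n^{−1} e^{−√λ · ρ_n}, where ρ_n = √((w−w')² + (θ−θ'−2nπ)²) (and the point (w,θ) ≠ (w',θ') so that ρ_0 > 0). -/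
open MeasureTheory Real

section Aux

open Set

private lemma fderiv_aux (c : ℝ) :
    ∀ u ∈ Ioi (0:ℝ), HasDerivWithinAt (fun u => u - c / u) (1 + c / u ^ 2) (Ioi 0) u := by
  intro u hu
  have hu' : (0:ℝ) < u := hu
  have h1 : HasDerivAt (fun u : ℝ => u⁻¹) (-(u^2)⁻¹) u := hasDerivAt_inv hu'.ne'
  have h3 : HasDerivAt (fun u:ℝ => u - c/u) (1 - c * -(u^2)⁻¹) u := by
    simpa [div_eq_mul_inv] using (hasDerivAt_id u).fun_sub (h1.const_mul c)
  have h2 : (1 : ℝ) - c * -(u^2)⁻¹ = 1 + c/u^2 := by field_simp; ring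
  rw [← h2]
  exact h3.hasDerivWithinAt

private lemma finj_aux (c : ℝ) (hc : 0 < c) : InjOn (fun u => u - c / u) (Ioi (0:ℝ)) := by
  intro u hu v hv h
  have hu' : (0:ℝ) < u := hu
  have hv' : (0:ℝ) < v := hv
  simp only [] at h
  have key : (u - v) * (u * v + c) = 0 := by
    field_simp at h
    nlinarith [h]
  rcases mul_eq_zero.1 key with h1 | h2
  · linarith
  · nlinarith

private lemma fimg_aux (c : ℝ) (hc : 0 < c) : (fun u => u - c / u) '' (Ioi (0:ℝ)) = univ := by
  ext v
  simp only [mem_image, mem_univ, iff_true, mem_Ioi]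
  set s := Real.sqrt (v ^ 2 + 4 * c) with hs
  have hs2 : s ^ 2 = v ^ 2 + 4 * c := Real.sq_sqrt (by nlinarith)
  have hsv : |v| < s := by
    have : Real.sqrt (v ^ 2) < s := by
      apply Real.sqrt_lt_sqrt (sq_nonneg v); linarith
    simpa [Real.sqrt_sq_eq_abs] using this
  have hu : (0:ℝ) < (v + s) / 2 := by
    have := neg_abs_le v
    linarith
  have hvs : v + s ≠ 0 := by linarith [neg_abs_le v]
  refine ⟨(v + s) / 2, hu, ?_⟩
  field_simp
  nlinarith [hs2]

private lemma total_aux (c : ℝ) (hc : 0 < c) :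
    IntegrableOn (fun u => (1 + c / u ^ 2) * Real.exp (-(u - c / u) ^ 2)) (Ioi (0:ℝ)) ∧
    ∫ u in Ioi (0:ℝ), (1 + c / u ^ 2) * Real.exp (-(u - c / u) ^ 2) = Real.sqrt π := by
  have hgauss : Integrable (fun v : ℝ => Real.exp (-v ^ 2)) := by
    simpa using integrable_exp_neg_mul_sq (one_pos (α := ℝ))
  have hcongr : ∀ u ∈ Ioi (0:ℝ),
      |1 + c / u ^ 2| • Real.exp (-(u - c / u) ^ 2)
        = (1 + c / u ^ 2) * Real.exp (-(u - c / u) ^ 2) := by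
    intro u hu
    have hu' : (0:ℝ) < u := hu
    have : (0:ℝ) < 1 + c / u ^ 2 := by positivity
    rw [abs_of_pos this, smul_eq_mul]
  constructor
  · have := (integrableOn_image_iff_integrableOn_abs_deriv_smul measurableSet_Ioi
      (fderiv_aux c) (finj_aux c hc) (fun v => Real.exp (-v ^ 2))).1
      (by rw [fimg_aux c hc]; exact hgauss.integrableOn)
    exact this.congr_fun hcongr measurableSet_Ioi
  · have key := integral_image_eq_integral_abs_deriv_smul measurableSet_Ioi
      (fderiv_aux c) (finj_aux c hc) (fun v => Real.exp (-v ^ 2))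
    rw [fimg_aux c hc, Measure.restrict_univ] at key
    rw [← setIntegral_congr_fun measurableSet_Ioi hcongr, ← key]
    simpa using integral_gaussian 1

private lemma inv_deriv_aux (c : ℝ) :
    ∀ u ∈ Ioi (0:ℝ), HasDerivWithinAt (fun u => c / u) (-(c / u ^ 2)) (Ioi 0) u := by
  intro u hu
  have hu' : (0:ℝ) < u := hu
  have h1 : HasDerivAt (fun u : ℝ => u⁻¹) (-(u^2)⁻¹) u := hasDerivAt_inv hu'.ne'
  have h3 : HasDerivAt (fun u:ℝ => c/u) (c * -(u^2)⁻¹) u := by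
    simpa [div_eq_mul_inv] using h1.const_mul c
  have h2 : c * -(u^2)⁻¹ = -(c/u^2) := by field_simp
  rw [← h2]
  exact h3.hasDerivWithinAt

private lemma inv_inj_aux (c : ℝ) (hc : 0 < c) : InjOn (fun u => c / u) (Ioi (0:ℝ)) := by
  intro u hu v hv h
  have hu' : (0:ℝ) < u := hu
  have hv' : (0:ℝ) < v := hv
  simp only [] at h
  field_simp at h
  exact h.symm

private lemma inv_img_aux (c : ℝ) (hc : 0 < c) : (fun u => c / u) '' (Ioi (0:ℝ)) = Ioi (0:ℝ) := by
  ext v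
  simp only [mem_image, mem_Ioi]
  constructor
  · rintro ⟨u, hu, rfl⟩; positivity
  · intro hv
    exact ⟨c / v, by positivity, by field_simp⟩

private lemma inv_subst (c : ℝ) (hc : 0 < c) (g : ℝ → ℝ) :
    ∫ v in Ioi (0:ℝ), g v = ∫ u in Ioi (0:ℝ), (c / u ^ 2) * g (c / u) := by
  have key := integral_image_eq_integral_abs_deriv_smul measurableSet_Ioi
    (inv_deriv_aux c) (inv_inj_aux c hc) g
  rw [inv_img_aux c hc] at key
  rw [key]
  refine setIntegral_congr_fun measurableSet_Ioi fun u hu => ?_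
  have hu' : (0:ℝ) < u := hu
  have : |(-(c / u ^ 2))| = c / u ^ 2 := by
    rw [abs_neg, abs_of_pos (by positivity)]
  rw [this, smul_eq_mul]

private lemma meas1 (c : ℝ) : AEStronglyMeasurable (fun u : ℝ => Real.exp (-(u - c / u) ^ 2))
    (volume.restrict (Ioi (0:ℝ))) := by
  apply Measurable.aestronglyMeasurable
  exact ((measurable_id.sub (measurable_const.div measurable_id)).pow_const 2).neg.exp

private lemma glasser_pieces (c : ℝ) (hc : 0 < c) :
    IntegrableOn (fun u => Real.exp (-(u - c / u) ^ 2)) (Ioi (0:ℝ)) ∧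
    IntegrableOn (fun u => (c / u ^ 2) * Real.exp (-(u - c / u) ^ 2)) (Ioi (0:ℝ)) := by
  obtain ⟨hint, _⟩ := total_aux c hc
  constructor
  · refine hint.mono' (meas1 c) ?_
    filter_upwards [ae_restrict_mem measurableSet_Ioi] with u hu
    have hu' : (0:ℝ) < u := hu
    rw [Real.norm_eq_abs, abs_of_pos (Real.exp_pos _)]
    nlinarith [Real.exp_pos (-(u - c / u) ^ 2), div_pos hc (pow_pos hu' 2)]
  · refine hint.mono' (((measurable_const.div (measurable_id.pow_const 2)).mul
      ((measurable_id.sub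
        (measurable_const.div measurable_id)).pow_const 2).neg.exp).aestronglyMeasurable) ?_
    filter_upwards [ae_restrict_mem measurableSet_Ioi] with u hu
    have hu' : (0:ℝ) < u := hu
    have h1 : (0:ℝ) < c / u ^ 2 := by positivity
    rw [Real.norm_eq_abs, abs_of_pos (by positivity)]
    nlinarith [Real.exp_pos (-(u - c / u) ^ 2)]

private lemma glasser_half (c : ℝ) (hc : 0 < c) :
    ∫ u in Ioi (0:ℝ), Real.exp (-(u - c / u) ^ 2) = Real.sqrt π / 2 := by
  obtain ⟨hint, htot⟩ := total_aux c hc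
  obtain ⟨h1, h2⟩ := glasser_pieces c hc
  have heq : ∫ u in Ioi (0:ℝ), Real.exp (-(u - c / u) ^ 2)
      = ∫ u in Ioi (0:ℝ), (c / u ^ 2) * Real.exp (-(u - c / u) ^ 2) := by
    rw [inv_subst c hc (fun u => Real.exp (-(u - c / u) ^ 2))]
    refine setIntegral_congr_fun measurableSet_Ioi fun u hu => ?_
    have hu' : (0:ℝ) < u := hu
    have hcc : c / (c / u) = u := by field_simp
    rw [hcc]
    have : (c / u - u) ^ 2 = (u - c / u) ^ 2 := by ring
    rw [this]
  have hsum : (∫ u in Ioi (0:ℝ), Real.exp (-(u - c / u) ^ 2))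
      + ∫ u in Ioi (0:ℝ), (c / u ^ 2) * Real.exp (-(u - c / u) ^ 2) = Real.sqrt π := by
    rw [← integral_add h1 h2, ← htot]
    refine setIntegral_congr_fun measurableSet_Ioi fun u hu => ?_
    ring
  linarith [heq ▸ hsum]

private lemma glasser_J (c : ℝ) (hc : 0 < c) :
    IntegrableOn (fun u => Real.exp (-(u ^ 2 + c ^ 2 / u ^ 2))) (Ioi (0:ℝ)) ∧
    ∫ u in Ioi (0:ℝ), Real.exp (-(u ^ 2 + c ^ 2 / u ^ 2))
      = Real.exp (-2 * c) * (Real.sqrt π / 2) := by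
  have hcongr : ∀ u ∈ Ioi (0:ℝ),
      Real.exp (-(u ^ 2 + c ^ 2 / u ^ 2)) = Real.exp (-2 * c) * Real.exp (-(u - c / u) ^ 2) := by
    intro u hu
    have hu' : (0:ℝ) < u := hu
    rw [← Real.exp_add]
    congr 1
    field_simp
    ring
  constructor
  · have h : IntegrableOn
        (fun u => Real.exp (-2 * c) * Real.exp (-(u - c / u) ^ 2)) (Ioi (0:ℝ)) :=
      (glasser_pieces c hc).1.const_mul (Real.exp (-2 * c))
    exact h.congr_fun (fun u hu => (hcongr u hu).symm) measurableSet_Ioi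
  · rw [setIntegral_congr_fun measurableSet_Ioi hcongr, integral_const_mul,
      glasser_half c hc]

private lemma sq_deriv_aux (a : ℝ) :
    ∀ u ∈ Ioi (0:ℝ), HasDerivWithinAt (fun u => a / u ^ 2) (-(2 * a / u ^ 3)) (Ioi 0) u := by
  intro u hu
  have hu' : (0:ℝ) < u := hu
  have h1 : HasDerivAt (fun u : ℝ => (u ^ 2)⁻¹) (-((u^2)^2)⁻¹ * (2 * u)) u :=
    (hasDerivAt_inv (by positivity)).comp u (by simpa using hasDerivAt_pow 2 u)
  have h3 : HasDerivAt (fun u:ℝ => a / u ^ 2) (a * (-((u^2)^2)⁻¹ * (2 * u))) u := by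
    simpa [div_eq_mul_inv] using h1.const_mul a
  have h2 : a * (-((u^2)^2)⁻¹ * (2 * u)) = -(2 * a / u ^ 3) := by field_simp
  rw [← h2]
  exact h3.hasDerivWithinAt

private lemma sq_inj_aux (a : ℝ) (ha : 0 < a) : InjOn (fun u => a / u ^ 2) (Ioi (0:ℝ)) := by
  intro u hu v hv h
  have hu' : (0:ℝ) < u := hu
  have hv' : (0:ℝ) < v := hv
  simp only [] at h
  field_simp at h
  exact (pow_left_inj₀ hu'.le hv'.le two_ne_zero).1 h.symm

private lemma sq_img_aux (a : ℝ) (ha : 0 < a) :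
    (fun u => a / u ^ 2) '' (Ioi (0:ℝ)) = Ioi (0:ℝ) := by
  ext v
  simp only [mem_image, mem_Ioi]
  constructor
  · rintro ⟨u, hu, rfl⟩; positivity
  · intro hv
    refine ⟨Real.sqrt (a / v), by positivity, ?_⟩
    rw [Real.sq_sqrt (by positivity)]
    field_simp

private lemma bessel_int (a b : ℝ) (ha : 0 < a) (hb : 0 < b) :
    IntegrableOn (fun t => t ^ (-(1:ℝ)/2) * t⁻¹ * Real.exp (-(b * t + a / t))) (Ioi (0:ℝ)) ∧
    ∫ t in Ioi (0:ℝ), t ^ (-(1:ℝ)/2) * t⁻¹ * Real.exp (-(b * t + a / t))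
      = Real.sqrt π / Real.sqrt a * Real.exp (-2 * Real.sqrt (a * b)) := by
  set c := Real.sqrt (a * b) with hc
  have hc' : (0:ℝ) < c := Real.sqrt_pos.2 (by positivity)
  have hc2 : c ^ 2 = a * b := Real.sq_sqrt (by positivity)
  set g := fun t : ℝ => t ^ (-(1:ℝ)/2) * t⁻¹ * Real.exp (-(b * t + a / t)) with hg
  have hcongr : ∀ u ∈ Ioi (0:ℝ),
      |(-(2 * a / u ^ 3))| • g (a / u ^ 2)
        = (2 / Real.sqrt a) * Real.exp (-(u ^ 2 + c ^ 2 / u ^ 2)) := by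
    intro u hu
    have hu' : (0:ℝ) < u := hu
    have hau : (0:ℝ) < a / u ^ 2 := by positivity
    have hsa : (0:ℝ) < Real.sqrt a := Real.sqrt_pos.2 ha
    have habs : |(-(2 * a / u ^ 3))| = 2 * a / u ^ 3 := by
      rw [abs_neg, abs_of_pos (by positivity)]
    have hrpow : (a / u ^ 2) ^ (-(1:ℝ)/2) = u / Real.sqrt a := by
      rw [show (-(1:ℝ)/2) = -(1/2 : ℝ) by ring, Real.rpow_neg hau.le,
        ← Real.sqrt_eq_rpow]
      rw [show a / u ^ 2 = (Real.sqrt a / u) ^ 2 by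
        rw [div_pow, Real.sq_sqrt ha.le],
        Real.sqrt_sq (by positivity)]
      rw [inv_div]
    have hexp : b * (a / u ^ 2) + a / (a / u ^ 2) = u ^ 2 + c ^ 2 / u ^ 2 := by
      field_simp
      nlinarith [hc2]
    rw [habs, smul_eq_mul, hg]
    simp only []
    rw [hrpow, hexp]
    have : (a / u ^ 2)⁻¹ = u ^ 2 / a := by rw [inv_div]
    rw [this]
    field_simp
  have key := integral_image_eq_integral_abs_deriv_smul measurableSet_Ioi
    (sq_deriv_aux a) (sq_inj_aux a ha) g
  rw [sq_img_aux a ha] at key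
  obtain ⟨hJint, hJval⟩ := glasser_J c hc'
  constructor
  · have := (integrableOn_image_iff_integrableOn_abs_deriv_smul measurableSet_Ioi
      (sq_deriv_aux a) (sq_inj_aux a ha) g)
    rw [sq_img_aux a ha] at this
    rw [this]
    have h2 : IntegrableOn (fun u => (2 / Real.sqrt a) * Real.exp (-(u ^ 2 + c ^ 2 / u ^ 2)))
        (Ioi (0:ℝ)) := hJint.const_mul _
    exact h2.congr_fun (fun u hu => (hcongr u hu).symm) measurableSet_Ioi
  · rw [key, setIntegral_congr_fun measurableSet_Ioi hcongr, integral_const_mul, hJval]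
    have hsa : (0:ℝ) < Real.sqrt a := Real.sqrt_pos.2 ha
    field_simp

private lemma term_eval (lam d c : ℝ) (hlam : 0 < lam) (hdc : 0 < d ^ 2 + c ^ 2) :
    IntegrableOn (fun t => t ^ (-(1:ℝ)/2) * Real.exp (-lam * t) *
      ((4 * π * t)⁻¹ * Real.exp (-d ^ 2 / (4 * t))) * Real.exp (-c ^ 2 / (4 * t)))
      (Ioi (0:ℝ)) ∧
    ∫ t in Ioi (0:ℝ), t ^ (-(1:ℝ)/2) * Real.exp (-lam * t) *
      ((4 * π * t)⁻¹ * Real.exp (-d ^ 2 / (4 * t))) * Real.exp (-c ^ 2 / (4 * t))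
      = Real.sqrt π / (2 * π) *
        ((Real.sqrt (d ^ 2 + c ^ 2))⁻¹ *
          Real.exp (-Real.sqrt lam * Real.sqrt (d ^ 2 + c ^ 2))) := by
  have hπ : (0:ℝ) < π := Real.pi_pos
  set a := (d ^ 2 + c ^ 2) / 4 with ha_def
  have ha : 0 < a := by positivity
  set ρ := Real.sqrt (d ^ 2 + c ^ 2) with hρ_def
  have hρ : 0 < ρ := Real.sqrt_pos.2 hdc
  have hρ2 : ρ ^ 2 = d ^ 2 + c ^ 2 := Real.sq_sqrt hdc.le
  have hsa : Real.sqrt a = ρ / 2 := by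
    rw [show a = (ρ / 2) ^ 2 by rw [div_pow, hρ2]; norm_num; exact ha_def,
      Real.sqrt_sq (by positivity)]
  have hsab : Real.sqrt (a * lam) = ρ / 2 * Real.sqrt lam := by
    rw [show a * lam = (ρ / 2 * Real.sqrt lam) ^ 2 by
      rw [mul_pow, div_pow, hρ2, Real.sq_sqrt hlam.le]; ring,
      Real.sqrt_sq (by positivity)]
  have hcongr : ∀ t ∈ Ioi (0:ℝ),
      t ^ (-(1:ℝ)/2) * Real.exp (-lam * t) *
        ((4 * π * t)⁻¹ * Real.exp (-d ^ 2 / (4 * t))) * Real.exp (-c ^ 2 / (4 * t))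
      = (4 * π)⁻¹ * (t ^ (-(1:ℝ)/2) * t⁻¹ * Real.exp (-(lam * t + a / t))) := by
    intro t ht
    have ht' : (0:ℝ) < t := ht
    rw [show (4 * π * t)⁻¹ = (4 * π)⁻¹ * t⁻¹ by rw [mul_inv]]
    rw [show -(lam * t + a / t) = -lam * t + (-d ^ 2 / (4 * t) + -c ^ 2 / (4 * t)) by
      rw [ha_def]; field_simp; ring]
    rw [Real.exp_add, Real.exp_add]
    ring
  obtain ⟨hint, hval⟩ := bessel_int a lam ha hlam
  constructor
  · have h2 : IntegrableOn
        (fun t => (4 * π)⁻¹ * (t ^ (-(1:ℝ)/2) * t⁻¹ * Real.exp (-(lam * t + a / t))))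
        (Ioi (0:ℝ)) := hint.const_mul _
    exact h2.congr_fun (fun t ht => (hcongr t ht).symm) measurableSet_Ioi
  · rw [setIntegral_congr_fun measurableSet_Ioi hcongr, integral_const_mul, hval,
      hsa, hsab]
    rw [show -2 * (ρ / 2 * Real.sqrt lam) = -Real.sqrt lam * ρ by ring]
    field_simp
    ring

private lemma summable_rho (k m : ℝ) (hk : 0 < k) (hm : 0 < m) (ρ : ℤ → ℝ)
    (hρm : ∀ n, m ≤ ρ n) (hρl : ∀ n : ℤ, 2 * π * |(n:ℝ)| - 2 * π ≤ ρ n) :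
    Summable (fun n : ℤ => (ρ n)⁻¹ * Real.exp (-k * ρ n)) := by
  have hπ : (0:ℝ) < π := Real.pi_pos
  set r := Real.exp (-(2 * π * k)) with hr
  have hr0 : 0 < r := Real.exp_pos _
  have hr1 : r < 1 := by
    rw [hr, Real.exp_lt_one_iff]
    nlinarith
  set C := m⁻¹ * Real.exp (2 * π * k) with hC
  have hC0 : 0 ≤ C := by positivity
  have hg : Summable (fun n : ℤ => C * r ^ n.natAbs) := by
    apply Summable.of_nat_of_neg
    · simpa using (summable_geometric_of_lt_one hr0.le hr1).mul_left C
    · simpa using (summable_geometric_of_lt_one hr0.le hr1).mul_left C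
  apply Summable.of_norm_bounded hg
  intro n
  have h1 : 0 < ρ n := lt_of_lt_of_le hm (hρm n)
  rw [Real.norm_eq_abs, abs_of_pos (by positivity)]
  have h2 : (ρ n)⁻¹ ≤ m⁻¹ := inv_anti₀ hm (hρm n)
  have h3 : Real.exp (-k * ρ n) ≤ Real.exp (2 * π * k) * r ^ n.natAbs := by
    have h4 : r ^ n.natAbs = Real.exp (-(2 * π * k) * n.natAbs) := by
      rw [mul_comm (-(2 * π * k)) (n.natAbs : ℝ), Real.exp_nat_mul]
    rw [h4, ← Real.exp_add]
    apply Real.exp_le_exp.2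
    have habs : |(n:ℝ)| = (n.natAbs : ℝ) := by
      rw [← Int.cast_abs, Int.abs_eq_natAbs, Int.cast_natCast]
    have := hρl n
    rw [habs] at this
    nlinarith [hρm n]
  calc (ρ n)⁻¹ * Real.exp (-k * ρ n)
      ≤ m⁻¹ * (Real.exp (2 * π * k) * r ^ n.natAbs) := by
        apply mul_le_mul h2 h3 (Real.exp_pos _).le (by positivity)
    _ = C * r ^ n.natAbs := by rw [hC]; ring

end Aux

/-- Explicit formula for the kernel of `(-∂_w² - Δ_{𝕊¹} + λ)^{-1/2}` on the
cylinder `ℝ × 𝕊¹`, obtained from the subordination formula applied to the heat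
kernel `e^{t(∂_w² + Δ_{𝕊¹})} = (4πt)^{-1} e^{-(w-w')²/(4t)} Σ_n e^{-(θ-θ'-2nπ)²/(4t)}`:
`(1/Γ(1/2)) ∫_0^∞ t^{-1/2} e^{-λt} (4πt)^{-1} e^{-(w-w')²/(4t)}
  Σ_n e^{-(θ-θ'-2nπ)²/(4t)} dt = (1/2π) Σ_n ρ_n⁻¹ e^{-√λ ρ_n}`,
where `ρ_n = √((w-w')² + (θ-θ'-2nπ)²)`. -/
theorem cylinder_resolvent_kernel (lam : ℝ) (hlam : 0 < lam) (w w' θ θ' : ℝ)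
    (hθ : θ ∈ Set.Ico (-π) π) (hθ' : θ' ∈ Set.Ico (-π) π)
    (hne : (w, θ) ≠ (w', θ')) :
    (1 / Real.Gamma (1 / 2)) *
      ∫ t in Set.Ioi (0 : ℝ),
        t ^ (-(1 : ℝ) / 2) * Real.exp (-lam * t) *
          ((4 * π * t)⁻¹ * Real.exp (-(w - w') ^ 2 / (4 * t))) *
          ∑' n : ℤ, Real.exp (-(θ - θ' - 2 * (n : ℝ) * π) ^ 2 / (4 * t)) =
    (1 / (2 * π)) *
      ∑' n : ℤ,
        (Real.sqrt ((w - w') ^ 2 + (θ - θ' - 2 * (n : ℝ) * π) ^ 2))⁻¹ *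
          Real.exp (-Real.sqrt lam *
            Real.sqrt ((w - w') ^ 2 + (θ - θ' - 2 * (n : ℝ) * π) ^ 2)) := by
  have hπ : (0:ℝ) < π := Real.pi_pos
  -- notation
  set f : ℤ → ℝ → ℝ := fun n t =>
    t ^ (-(1 : ℝ) / 2) * Real.exp (-lam * t) *
      ((4 * π * t)⁻¹ * Real.exp (-(w - w') ^ 2 / (4 * t))) *
      Real.exp (-(θ - θ' - 2 * (n : ℝ) * π) ^ 2 / (4 * t)) with hf
  have h2π : |θ - θ'| < 2 * π := by
    rw [abs_lt]
    obtain ⟨h1, h2⟩ := hθ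
    obtain ⟨h1', h2'⟩ := hθ'
    constructor <;> linarith
  -- positivity of each ρ_n²
  have hpos : ∀ n : ℤ, 0 < (w - w') ^ 2 + (θ - θ' - 2 * (n : ℝ) * π) ^ 2 := by
    intro n
    rcases eq_or_ne n 0 with rfl | hn
    · have : w - w' ≠ 0 ∨ θ - θ' ≠ 0 := by
        by_contra h
        push_neg at h
        obtain ⟨h1, h2⟩ := h
        exact hne (by
          have hw : w = w' := by linarith [sub_eq_zero.1 h1]
          have hth : θ = θ' := by
            have := sub_eq_zero.1 h2; linarith
          rw [hw, hth])
      push_cast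
      rcases this with h | h
      · nlinarith [pow_two_pos_of_ne_zero h, sq_nonneg (θ - θ' - 2 * 0 * π)]
      · nlinarith [pow_two_pos_of_ne_zero h, sq_nonneg (w - w')]
    · have hcn : θ - θ' - 2 * (n : ℝ) * π ≠ 0 := by
        intro h
        have h1 : θ - θ' = 2 * (n : ℝ) * π := by linarith
        have h2 : (1:ℝ) ≤ |(n:ℝ)| := by
          have : (1:ℤ) ≤ |n| := Int.one_le_abs hn
          calc (1:ℝ) ≤ ((|n| : ℤ) : ℝ) := by exact_mod_cast this
            _ = |(n:ℝ)| := by rw [Int.cast_abs]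
        have h3 : |θ - θ'| = 2 * π * |(n:ℝ)| := by
          rw [h1]
          rw [abs_mul, abs_mul]
          rw [abs_of_pos hπ, abs_of_pos (by norm_num : (0:ℝ) < 2)]
          ring
        nlinarith
      nlinarith [pow_two_pos_of_ne_zero hcn, sq_nonneg (w - w')]
  -- lower bound for ρ_n
  have hρl : ∀ n : ℤ, 2 * π * |(n:ℝ)| - 2 * π ≤
      Real.sqrt ((w - w') ^ 2 + (θ - θ' - 2 * (n : ℝ) * π) ^ 2) := by
    intro n
    have h1 : |θ - θ' - 2 * (n : ℝ) * π| ≤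
        Real.sqrt ((w - w') ^ 2 + (θ - θ' - 2 * (n : ℝ) * π) ^ 2) := by
      rw [← Real.sqrt_sq_eq_abs]
      exact Real.sqrt_le_sqrt (by nlinarith [sq_nonneg (w - w')])
    have h2 : |2 * (n : ℝ) * π| - |θ - θ'| ≤ |θ - θ' - 2 * (n : ℝ) * π| := by
      calc |2 * (n : ℝ) * π| - |θ - θ'| ≤ |2 * (n : ℝ) * π - (θ - θ')| :=
            abs_sub_abs_le_abs_sub _ _
        _ = |θ - θ' - 2 * (n : ℝ) * π| := abs_sub_comm _ _
    have h3 : |2 * (n : ℝ) * π| = 2 * π * |(n:ℝ)| := by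
      rw [abs_mul, abs_mul, abs_of_pos hπ, abs_of_pos (by norm_num : (0:ℝ) < 2)]
      ring
    linarith
  set ρ : ℤ → ℝ := fun n => Real.sqrt ((w - w') ^ 2 + (θ - θ' - 2 * (n : ℝ) * π) ^ 2)
    with hρ
  have hρpos : ∀ n, 0 < ρ n := fun n => Real.sqrt_pos.2 (hpos n)
  set m : ℝ := min (min (ρ 0) (ρ 1)) (min (ρ (-1)) (2 * π)) with hm_def
  have hm : 0 < m := by
    apply lt_min (lt_min (hρpos 0) (hρpos 1)) (lt_min (hρpos (-1)) (by positivity))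
  have hρm : ∀ n, m ≤ ρ n := by
    intro n
    rcases eq_or_ne n 0 with rfl | h0
    · exact (min_le_left _ _).trans (min_le_left _ _)
    rcases eq_or_ne n 1 with rfl | h1
    · exact (min_le_left _ _).trans (min_le_right _ _)
    rcases eq_or_ne n (-1) with rfl | h2
    · exact (min_le_right _ _).trans (min_le_left _ _)
    · have hn2 : (2:ℝ) ≤ |(n:ℝ)| := by
        have : (2:ℤ) ≤ |n| := by rcases abs_cases n with ⟨h,_⟩|⟨h,_⟩ <;> omega
        calc (2:ℝ) ≤ ((|n| : ℤ) : ℝ) := by exact_mod_cast this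
          _ = |(n:ℝ)| := by rw [Int.cast_abs]
      have := hρl n
      have hm2 : m ≤ 2 * π := (min_le_right _ _).trans (min_le_right _ _)
      have : 2 * π ≤ ρ n := by nlinarith
      linarith
  have hk : 0 < Real.sqrt lam := Real.sqrt_pos.2 hlam
  have hsum : Summable (fun n : ℤ => (ρ n)⁻¹ * Real.exp (-Real.sqrt lam * ρ n)) :=
    summable_rho _ m hk hm ρ hρm hρl
  -- per-term facts
  have hterm := fun n : ℤ =>
    term_eval lam (w - w') (θ - θ' - 2 * (n : ℝ) * π) hlam (hpos n)
  have hint : ∀ n : ℤ, IntegrableOn (f n) (Set.Ioi (0:ℝ)) := fun n => (hterm n).1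
  have hval : ∀ n : ℤ, ∫ t in Set.Ioi (0:ℝ), f n t
      = Real.sqrt π / (2 * π) * ((ρ n)⁻¹ * Real.exp (-Real.sqrt lam * ρ n)) :=
    fun n => (hterm n).2
  -- rewrite integrand as a tsum
  have hintegrand : ∀ t : ℝ,
      t ^ (-(1 : ℝ) / 2) * Real.exp (-lam * t) *
        ((4 * π * t)⁻¹ * Real.exp (-(w - w') ^ 2 / (4 * t))) *
        (∑' n : ℤ, Real.exp (-(θ - θ' - 2 * (n : ℝ) * π) ^ 2 / (4 * t)))
      = ∑' n : ℤ, f n t := by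
    intro t
    rw [← tsum_mul_left]
  -- finiteness of the sum of lintegrals
  have hlin : ∀ n : ℤ, ∫⁻ t in Set.Ioi (0:ℝ), ‖f n t‖₊
      = ENNReal.ofReal
        (Real.sqrt π / (2 * π) * ((ρ n)⁻¹ * Real.exp (-Real.sqrt lam * ρ n))) := by
    intro n
    have h0 : 0 ≤ᵐ[volume.restrict (Set.Ioi (0:ℝ))] f n := by
      filter_upwards [ae_restrict_mem measurableSet_Ioi] with t ht
      have ht' : (0:ℝ) < t := ht
      rw [hf]
      positivity
    rw [← hval n, ofReal_integral_eq_lintegral_ofReal (hint n) h0]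
    apply lintegral_congr_ae
    filter_upwards [h0] with t ht
    rw [← ENNReal.ofReal_coe_nnreal, coe_nnnorm, Real.norm_eq_abs, abs_of_nonneg ht]
  have hfin : (∑' n : ℤ, ∫⁻ t in Set.Ioi (0:ℝ), ‖f n t‖₊) ≠ ⊤ := by
    have : (∑' n : ℤ, ∫⁻ t in Set.Ioi (0:ℝ), ‖f n t‖₊)
        = ENNReal.ofReal (∑' n : ℤ,
            Real.sqrt π / (2 * π) * ((ρ n)⁻¹ * Real.exp (-Real.sqrt lam * ρ n))) := by
      rw [ENNReal.ofReal_tsum_of_nonneg]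
      · exact tsum_congr hlin
      · intro n
        have := (hρpos n)
        positivity
      · exact hsum.mul_left _
    rw [this]
    exact ENNReal.ofReal_ne_top
  have hmeas : ∀ n : ℤ, AEStronglyMeasurable (f n) (volume.restrict (Set.Ioi (0:ℝ))) :=
    fun n => (hint n).1
  -- swap integral and sum
  have hswap : ∫ t in Set.Ioi (0:ℝ), ∑' n : ℤ, f n t
      = ∑' n : ℤ, ∫ t in Set.Ioi (0:ℝ), f n t := integral_tsum hmeas hfin
  calc (1 / Real.Gamma (1 / 2)) *
      ∫ t in Set.Ioi (0 : ℝ),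
        t ^ (-(1 : ℝ) / 2) * Real.exp (-lam * t) *
          ((4 * π * t)⁻¹ * Real.exp (-(w - w') ^ 2 / (4 * t))) *
          ∑' n : ℤ, Real.exp (-(θ - θ' - 2 * (n : ℝ) * π) ^ 2 / (4 * t))
      = (1 / Real.Gamma (1 / 2)) * ∫ t in Set.Ioi (0:ℝ), ∑' n : ℤ, f n t := by
        congr 1
        exact integral_congr_ae (Filter.Eventually.of_forall hintegrand)
    _ = (1 / Real.Gamma (1 / 2)) * ∑' n : ℤ, ∫ t in Set.Ioi (0:ℝ), f n t := by
        rw [hswap]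
    _ = (1 / Real.Gamma (1 / 2)) * (Real.sqrt π / (2 * π) *
          ∑' n : ℤ, (ρ n)⁻¹ * Real.exp (-Real.sqrt lam * ρ n)) := by
        rw [show (∑' n : ℤ, ∫ t in Set.Ioi (0:ℝ), f n t)
            = ∑' n : ℤ, Real.sqrt π / (2 * π) *
                ((ρ n)⁻¹ * Real.exp (-Real.sqrt lam * ρ n)) from tsum_congr hval,
          tsum_mul_left]
    _ = (1 / (2 * π)) * ∑' n : ℤ, (ρ n)⁻¹ * Real.exp (-Real.sqrt lam * ρ n) := by
        rw [Real.Gamma_one_half_eq]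
        have hsπ : Real.sqrt π ≠ 0 := (Real.sqrt_pos.2 hπ).ne'
        field_simp
        congr 1; funext n; ring_nf
end

section
/- Let a > 0 and ε > 0. There exists a constant C > 0, independent of t and θ, such that for all t > 0 and all θ ∈ ℝ, |∫_{−∞}^{∞} e^{iθξ} e^{−(ξ² − 2aξ²/√(ξ²+ε)) t} dξ| ≤ C t^{−1/2} e^{a²t}. -/
open MeasureTheory Real

/-- For `a > 0` and `ε > 0` there exists `C > 0`, independent of `t` and `θ`,
such that for all `t > 0` and `θ ∈ ℝ`:
`|∫_ℝ e^{iθξ} e^{-(ξ² - 2aξ²/√(ξ²+ε)) t} dξ| ≤ C t^{-1/2} e^{a²t}`. -/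
theorem oscillatory_integral_bound_one (a ε : ℝ) (ha : 0 < a) (hε : 0 < ε) :
    ∃ C > 0, ∀ t : ℝ, 0 < t → ∀ θ : ℝ,
      ‖∫ ξ : ℝ, Complex.exp (Complex.I * (θ : ℂ) * (ξ : ℂ)) *
          Complex.exp (-(((ξ ^ 2 - 2 * a * ξ ^ 2 / Real.sqrt (ξ ^ 2 + ε)) * t : ℝ) : ℂ))‖ ≤
        C * t ^ (-(1 : ℝ) / 2) * Real.exp (a ^ 2 * t) := by
  refine ⟨2 * Real.sqrt π, by positivity, ?_⟩
  intro t ht θ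
  have hint1 : Integrable (fun ξ : ℝ => Real.exp (-t * (ξ - a) ^ 2)) :=
    (integrable_exp_neg_mul_sq ht).comp_sub_right a
  have hint2 : Integrable (fun ξ : ℝ => Real.exp (-t * (ξ + a) ^ 2)) :=
    (integrable_exp_neg_mul_sq ht).comp_add_right a
  have hintg : Integrable (fun ξ : ℝ =>
      Real.exp (a ^ 2 * t) * (Real.exp (-t * (ξ - a) ^ 2) + Real.exp (-t * (ξ + a) ^ 2))) :=
    (hint1.add hint2).const_mul _
  have key : ‖∫ ξ : ℝ, Complex.exp (Complex.I * (θ : ℂ) * (ξ : ℂ)) *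
          Complex.exp (-(((ξ ^ 2 - 2 * a * ξ ^ 2 / Real.sqrt (ξ ^ 2 + ε)) * t : ℝ) : ℂ))‖ ≤
      ∫ ξ : ℝ, Real.exp (a ^ 2 * t) *
        (Real.exp (-t * (ξ - a) ^ 2) + Real.exp (-t * (ξ + a) ^ 2)) := by
    refine le_trans (norm_integral_le_integral_norm _) ?_
    refine integral_mono_of_nonneg (Filter.Eventually.of_forall fun ξ => norm_nonneg _) hintg
      (Filter.Eventually.of_forall fun ξ => ?_)
    have h1 : ‖Complex.exp (Complex.I * (θ : ℂ) * (ξ : ℂ))‖ = 1 := by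
      rw [Complex.norm_exp]
      simp
    have h2 : ‖Complex.exp (-(((ξ ^ 2 - 2 * a * ξ ^ 2 / Real.sqrt (ξ ^ 2 + ε)) * t : ℝ) : ℂ))‖
        = Real.exp (-((ξ ^ 2 - 2 * a * ξ ^ 2 / Real.sqrt (ξ ^ 2 + ε)) * t)) := by
      rw [Complex.norm_exp]
      simp [← Complex.ofReal_pow]
    simp only [norm_mul, h1, h2, one_mul]
    have hsp : 0 < Real.sqrt (ξ ^ 2 + ε) := Real.sqrt_pos.2 (by positivity)
    have hs : |ξ| ≤ Real.sqrt (ξ ^ 2 + ε) := by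
      rw [← Real.sqrt_sq_eq_abs]
      exact Real.sqrt_le_sqrt (by linarith)
    have h3 : ξ ^ 2 / Real.sqrt (ξ ^ 2 + ε) ≤ |ξ| := by
      rw [div_le_iff₀ hsp]
      nlinarith [sq_abs ξ, mul_le_mul_of_nonneg_left hs (abs_nonneg ξ)]
    have h4 : Real.exp (-((ξ ^ 2 - 2 * a * ξ ^ 2 / Real.sqrt (ξ ^ 2 + ε)) * t))
        ≤ Real.exp (a ^ 2 * t) * Real.exp (-t * (|ξ| - a) ^ 2) := by
      rw [← Real.exp_add]
      apply Real.exp_le_exp.2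
      have hprod : 0 ≤ t * (2 * a * (|ξ| - ξ ^ 2 / Real.sqrt (ξ ^ 2 + ε))) :=
        mul_nonneg ht.le (mul_nonneg (by linarith) (sub_nonneg.2 h3))
      have hdiv : 2 * a * ξ ^ 2 / Real.sqrt (ξ ^ 2 + ε)
          = 2 * a * (ξ ^ 2 / Real.sqrt (ξ ^ 2 + ε)) := by ring
      rw [hdiv]
      nlinarith [sq_abs ξ]
    have h5 : Real.exp (-t * (|ξ| - a) ^ 2)
        ≤ Real.exp (-t * (ξ - a) ^ 2) + Real.exp (-t * (ξ + a) ^ 2) := by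
      rcases le_or_gt 0 ξ with h | h
      · rw [abs_of_nonneg h]
        exact le_add_of_nonneg_right (Real.exp_pos _).le
      · rw [abs_of_neg h]
        have : -t * (-ξ - a) ^ 2 = -t * (ξ + a) ^ 2 := by ring
        rw [this]
        exact le_add_of_nonneg_left (Real.exp_pos _).le
    calc Real.exp (-((ξ ^ 2 - 2 * a * ξ ^ 2 / Real.sqrt (ξ ^ 2 + ε)) * t))
        ≤ Real.exp (a ^ 2 * t) * Real.exp (-t * (|ξ| - a) ^ 2) := h4
      _ ≤ Real.exp (a ^ 2 * t) *
          (Real.exp (-t * (ξ - a) ^ 2) + Real.exp (-t * (ξ + a) ^ 2)) :=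
          mul_le_mul_of_nonneg_left h5 (Real.exp_pos _).le
  have hI1 : (∫ ξ : ℝ, Real.exp (-t * (ξ - a) ^ 2)) = Real.sqrt (π / t) := by
    rw [integral_sub_right_eq_self (fun x => Real.exp (-t * x ^ 2)) a, integral_gaussian]
  have hI2 : (∫ ξ : ℝ, Real.exp (-t * (ξ + a) ^ 2)) = Real.sqrt (π / t) := by
    rw [integral_add_right_eq_self (fun x => Real.exp (-t * x ^ 2)) a, integral_gaussian]
  have hval : (∫ ξ : ℝ, Real.exp (a ^ 2 * t) *
      (Real.exp (-t * (ξ - a) ^ 2) + Real.exp (-t * (ξ + a) ^ 2)))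
      = Real.exp (a ^ 2 * t) * (2 * Real.sqrt (π / t)) := by
    rw [integral_const_mul, integral_add hint1 hint2, hI1, hI2]
    ring
  have hrpow : t ^ (-(1 : ℝ) / 2) = (Real.sqrt t)⁻¹ := by
    rw [neg_div, Real.rpow_neg ht.le, Real.sqrt_eq_rpow]
  have hst : Real.sqrt (π / t) = Real.sqrt π / Real.sqrt t := by
    rw [Real.sqrt_div Real.pi_nonneg]
  refine le_trans key ?_
  rw [hval, hrpow, hst]
  have hstpos : 0 < Real.sqrt t := Real.sqrt_pos.2 ht
  rw [div_eq_mul_inv]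
  ring_nf
  exact le_refl _
end

section
/- Let 0 < a ≤ 1/2, ε > 0, and set ε₁ = 1 − 2a/√(1+ε) > 0. Then there exists a constant C = C(ε, a) > 0 such that for all t > 0 and all θ, θ' with |θ − θ'| ≤ π, |k_a(t, θ − θ') − h(t, θ − θ')| ≤ C (1 + t) e^{−ε₁ t}, where k_a(t, φ) = (1/2π) Σ_{n∈ℤ} e^{−(n² − 2an²/√(n²+ε)) t} e^{inφ} and h(t, φ) = (1/2π) Σ_{n∈ℤ} e^{−n² t} e^{inφ}. -/
open MeasureTheory Real

/-- The heat kernel of the operator `T_a = -Σ_n (n² - 2an²/√(n²+ε)) P_n` on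
`L²(𝕊¹)`: `k_a(t, φ) = (1/2π) Σ_{n∈ℤ} e^{-(n² - 2an²/√(n²+ε)) t} e^{inφ}`. -/
noncomputable def heatKernelTa (a ε t φ : ℝ) : ℂ :=
  (1 / (2 * (π : ℂ))) * ∑' n : ℤ,
    Complex.exp (-((((n : ℝ) ^ 2 - 2 * a * (n : ℝ) ^ 2 / Real.sqrt ((n : ℝ) ^ 2 + ε)) * t : ℝ) : ℂ)) *
      Complex.exp (Complex.I * (n : ℂ) * (φ : ℂ))

/-- The heat kernel of the Laplace–Beltrami operator `Δ_{𝕊¹} = ∂_θ²` on the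
unit circle: `h(t, φ) = (1/2π) Σ_{n∈ℤ} e^{-n² t} e^{inφ}`. -/
noncomputable def heatKernelCircle (t φ : ℝ) : ℂ :=
  (1 / (2 * (π : ℂ))) * ∑' n : ℤ,
    Complex.exp (-(((n : ℝ) ^ 2 * t : ℝ) : ℂ)) * Complex.exp (Complex.I * (n : ℂ) * (φ : ℂ))

section hkaux

lemma hk_aux_sum_sq (y : ℝ) (hy0 : 0 ≤ y) (hy1 : y ≤ 1) (N : ℕ) :
    ∑ m ∈ Finset.range N, ((m : ℝ) + 1) * y ^ ((m + 1) ^ 2) ≤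
      ∑ k ∈ Finset.range (N ^ 2), y ^ (k + 1) := by
  induction N with
  | zero => simp
  | succ N ih =>
    have hsq : N ^ 2 ≤ (N + 1) ^ 2 := Nat.pow_le_pow_left (Nat.le_succ N) 2
    have hsplit : ∑ k ∈ Finset.range ((N + 1) ^ 2), y ^ (k + 1) =
        (∑ k ∈ Finset.range (N ^ 2), y ^ (k + 1)) +
          ∑ k ∈ Finset.Ico (N ^ 2) ((N + 1) ^ 2), y ^ (k + 1) := by
      rw [Finset.range_eq_Ico,
        ← Finset.sum_Ico_consecutive _ (Nat.zero_le _) hsq, Finset.range_eq_Ico]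
    rw [Finset.sum_range_succ, hsplit]
    refine add_le_add ih ?_
    have hcard : (Finset.Ico (N ^ 2) ((N + 1) ^ 2)).card = 2 * N + 1 := by
      rw [Nat.card_Ico, show (N + 1) ^ 2 = N ^ 2 + (2 * N + 1) by ring,
        Nat.add_sub_cancel_left]
    have hterm : ∀ k ∈ Finset.Ico (N ^ 2) ((N + 1) ^ 2),
        y ^ ((N + 1) ^ 2) ≤ y ^ (k + 1) := by
      intro k hk
      exact pow_le_pow_of_le_one hy0 hy1 (Finset.mem_Ico.mp hk).2
    have hsum := Finset.card_nsmul_le_sum _ _ _ hterm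
    rw [hcard, nsmul_eq_mul] at hsum
    refine le_trans ?_ hsum
    have h1 : ((N : ℝ) + 1) ≤ ((2 * N + 1 : ℕ) : ℝ) := by
      push_cast
      linarith [Nat.cast_nonneg (α := ℝ) N]
    exact mul_le_mul_of_nonneg_right h1 (pow_nonneg hy0 _)

lemma hk_aux_key (c t : ℝ) (hc : 0 < c) (ht : 0 < t) :
    Summable (fun m : ℕ => ((m : ℝ) + 1) * Real.exp (-(c * ((m : ℝ) + 1) ^ 2 * t))) ∧
    ∑' m : ℕ, ((m : ℝ) + 1) * Real.exp (-(c * ((m : ℝ) + 1) ^ 2 * t)) ≤ 1 / (c * t) := by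
  set y := Real.exp (-(c * t)) with hy
  have hy0 : 0 < y := Real.exp_pos _
  have hy1 : y < 1 := by
    rw [hy, Real.exp_lt_one_iff]
    nlinarith
  have hterm : ∀ m : ℕ, ((m : ℝ) + 1) * Real.exp (-(c * ((m : ℝ) + 1) ^ 2 * t)) =
      ((m : ℝ) + 1) * y ^ ((m + 1) ^ 2) := by
    intro m
    rw [hy, ← Real.exp_nat_mul]
    congr 2
    push_cast
    ring
  have hsumgeo : Summable (fun k : ℕ => y ^ (k + 1)) := by
    simpa [pow_succ'] using (summable_geometric_of_lt_one hy0.le hy1).mul_left y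
  have htsumgeo : ∑' k : ℕ, y ^ (k + 1) = y * (1 - y)⁻¹ := by
    simp only [pow_succ']
    rw [tsum_mul_left, tsum_geometric_of_lt_one hy0.le hy1]
  have h1y : 0 < 1 - y := by linarith
  have hgeobound : y * (1 - y)⁻¹ ≤ 1 / (c * t) := by
    rw [← div_eq_mul_inv, div_le_div_iff₀ h1y (by positivity)]
    have h := Real.add_one_le_exp (c * t)
    have hmul : y * Real.exp (c * t) = 1 := by
      rw [hy, ← Real.exp_add]; simp
    nlinarith
  have hbound : ∀ N : ℕ, ∑ m ∈ Finset.range N,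
      ((m : ℝ) + 1) * Real.exp (-(c * ((m : ℝ) + 1) ^ 2 * t)) ≤ 1 / (c * t) := by
    intro N
    calc ∑ m ∈ Finset.range N, ((m : ℝ) + 1) * Real.exp (-(c * ((m : ℝ) + 1) ^ 2 * t))
        = ∑ m ∈ Finset.range N, ((m : ℝ) + 1) * y ^ ((m + 1) ^ 2) := by
          exact Finset.sum_congr rfl fun m _ => hterm m
      _ ≤ ∑ k ∈ Finset.range (N ^ 2), y ^ (k + 1) := hk_aux_sum_sq y hy0.le hy1.le N
      _ ≤ ∑' k : ℕ, y ^ (k + 1) := by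
          exact Summable.sum_le_tsum _ (fun k _ => pow_nonneg hy0.le _) hsumgeo
      _ = y * (1 - y)⁻¹ := htsumgeo
      _ ≤ 1 / (c * t) := hgeobound
  have hnn : ∀ m : ℕ, 0 ≤ ((m : ℝ) + 1) * Real.exp (-(c * ((m : ℝ) + 1) ^ 2 * t)) := by
    intro m; positivity
  exact ⟨summable_of_sum_range_le hnn hbound, Real.tsum_le_of_sum_range_le hnn hbound⟩

lemma hk_aux_key2 (c t : ℝ) (hc : 0 < c) (ht : 0 < t) :
    Summable (fun m : ℕ => ((m : ℝ) + 1) * Real.exp (-(c * (m : ℝ) ^ 2 * t))) ∧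
    ∑' m : ℕ, ((m : ℝ) + 1) * Real.exp (-(c * (m : ℝ) ^ 2 * t)) ≤ 1 + 2 / (c * t) := by
  obtain ⟨hs, hb⟩ := hk_aux_key c t hc ht
  have hshift : ∀ m : ℕ, (((m + 1 : ℕ) : ℝ) + 1) * Real.exp (-(c * ((m + 1 : ℕ) : ℝ) ^ 2 * t)) ≤
      2 * (((m : ℝ) + 1) * Real.exp (-(c * ((m : ℝ) + 1) ^ 2 * t))) := by
    intro m
    push_cast
    have hE : 0 < Real.exp (-(c * ((m : ℝ) + 1) ^ 2 * t)) := Real.exp_pos _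
    nlinarith [Nat.cast_nonneg (α := ℝ) m]
  have hnn : ∀ m : ℕ, 0 ≤ ((m : ℝ) + 1) * Real.exp (-(c * (m : ℝ) ^ 2 * t)) := by
    intro m; positivity
  have hs2 : Summable (fun m : ℕ =>
      (((m + 1 : ℕ) : ℝ) + 1) * Real.exp (-(c * ((m + 1 : ℕ) : ℝ) ^ 2 * t))) :=
    Summable.of_nonneg_of_le (fun m => hnn (m + 1)) hshift (hs.mul_left 2)
  have hsfull : Summable (fun m : ℕ => ((m : ℝ) + 1) * Real.exp (-(c * (m : ℝ) ^ 2 * t))) :=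
    (summable_nat_add_iff 1).mp hs2
  refine ⟨hsfull, ?_⟩
  rw [Summable.tsum_eq_zero_add hsfull]
  have h0 : ((0 : ℕ) : ℝ) + 1 = 1 := by norm_num
  have hzero : (((0 : ℕ) : ℝ) + 1) * Real.exp (-(c * ((0 : ℕ) : ℝ) ^ 2 * t)) = 1 := by
    norm_num
  have htail : ∑' m : ℕ, (((m + 1 : ℕ) : ℝ) + 1) * Real.exp (-(c * ((m + 1 : ℕ) : ℝ) ^ 2 * t)) ≤
      2 / (c * t) := by
    calc ∑' m : ℕ, (((m + 1 : ℕ) : ℝ) + 1) * Real.exp (-(c * ((m + 1 : ℕ) : ℝ) ^ 2 * t))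
        ≤ ∑' m : ℕ, 2 * (((m : ℝ) + 1) * Real.exp (-(c * ((m : ℝ) + 1) ^ 2 * t))) :=
          Summable.tsum_le_tsum hshift hs2 (hs.mul_left 2)
      _ = 2 * ∑' m : ℕ, ((m : ℝ) + 1) * Real.exp (-(c * ((m : ℝ) + 1) ^ 2 * t)) := tsum_mul_left
      _ ≤ 2 * (1 / (c * t)) := by linarith
      _ = 2 / (c * t) := by ring
  rw [hzero]
  linarith

lemma hk_exp_sub_exp (x y : ℝ) (_hxy : x ≤ y) :
    Real.exp (-x) - Real.exp (-y) ≤ (y - x) * Real.exp (-x) := by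
  have h := Real.add_one_le_exp (x - y)
  have hexp : Real.exp (-y) = Real.exp (-x) * Real.exp (x - y) := by
    rw [← Real.exp_add]; ring_nf
  calc Real.exp (-x) - Real.exp (-y) = Real.exp (-x) * (1 - Real.exp (x - y)) := by
        rw [hexp]; ring
    _ ≤ Real.exp (-x) * (y - x) := by
        refine mul_le_mul_of_nonneg_left ?_ (Real.exp_pos _).le
        linarith
    _ = (y - x) * Real.exp (-x) := mul_comm _ _

lemma hk_summable_int {u : ℤ → ℂ} {r : ℝ} (hr0 : 0 ≤ r) (hr1 : r < 1)
    (hb : ∀ n : ℤ, ‖u n‖ ≤ r ^ n.natAbs) : Summable u := by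
  have hgeo : Summable (fun m : ℕ => r ^ m) := summable_geometric_of_lt_one hr0 hr1
  have h1 : Summable (fun m : ℕ => u m) := by
    refine Summable.of_norm (Summable.of_nonneg_of_le (fun m => norm_nonneg _)
      (fun m => ?_) hgeo)
    simpa using hb (m : ℤ)
  have h2 : Summable (fun m : ℕ => u (-(m + 1))) := by
    refine Summable.of_norm (Summable.of_nonneg_of_le (fun m => norm_nonneg _)
      (fun m => ?_) hgeo)
    have := hb (-((m : ℤ) + 1))
    have hna : (-((m : ℤ) + 1)).natAbs = m + 1 := by omega
    rw [hna] at this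
    exact this.trans (pow_le_pow_of_le_one hr0 hr1.le (Nat.le_succ m))
  exact Summable.of_nat_of_neg_add_one h1 h2

lemma hk_natAbs_le_sq (n : ℤ) : (n.natAbs : ℝ) ≤ (n:ℝ)^2 := by
  have h1 : (n.natAbs : ℝ) ^ 2 = (n:ℝ)^2 := by
    rw [Nat.cast_natAbs, Int.cast_abs, sq_abs]
  have h2 : (n.natAbs : ℝ) ≤ (n.natAbs : ℝ)^2 := by
    exact_mod_cast Nat.le_self_pow two_ne_zero n.natAbs
  linarith

end hkaux

set_option maxHeartbeats 1000000

/-- Comparison of the heat kernels of `T_a` and of `Δ_{𝕊¹}`: for `0 < a ≤ 1/2`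
and `ε > 0`, with `ε₁ = 1 - 2a/√(1+ε) > 0`, there is `C = C(ε, a) > 0` with
`|k_a(t, θ-θ') - h(t, θ-θ')| ≤ C (1 + t) e^{-ε₁ t}` for all `t > 0` and
`|θ - θ'| ≤ π`. -/
theorem heat_kernel_comparison (a ε : ℝ) (ha0 : 0 < a) (ha1 : a ≤ 1 / 2) (hε : 0 < ε) :
    0 < 1 - 2 * a / Real.sqrt (1 + ε) ∧
    ∃ C > 0, ∀ t : ℝ, 0 < t → ∀ θ θ' : ℝ, |θ - θ'| ≤ π →
      ‖heatKernelTa a ε t (θ - θ') - heatKernelCircle t (θ - θ')‖ ≤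
        C * (1 + t) * Real.exp (-(1 - 2 * a / Real.sqrt (1 + ε)) * t) := by
  have hπ : (0:ℝ) < π := Real.pi_pos
  have hs0 : (0:ℝ) < Real.sqrt (1 + ε) := Real.sqrt_pos.mpr (by linarith)
  have hs1 : 1 < Real.sqrt (1 + ε) := by
    nlinarith [Real.sq_sqrt (show (0:ℝ) ≤ 1 + ε by linarith), Real.sqrt_nonneg (1 + ε)]
  have hε₁ : 0 < 1 - 2 * a / Real.sqrt (1 + ε) := by
    have : 2 * a / Real.sqrt (1 + ε) < 1 := (div_lt_one hs0).mpr (by linarith)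
    linarith
  set e1 : ℝ := 1 - 2 * a / Real.sqrt (1 + ε) with he1
  refine ⟨hε₁, 4 * a + 8 * a / e1,
    add_pos (by positivity) (div_pos (by positivity) hε₁), ?_⟩
  intro t ht θ θ' hθ
  set φ := θ - θ' with hφ
  set lam : ℤ → ℝ := fun n => (n:ℝ)^2 - 2*a*(n:ℝ)^2 / Real.sqrt ((n:ℝ)^2 + ε) with hlam
  have hsq1 : ∀ n : ℤ, n ≠ 0 → (1:ℝ) ≤ (n:ℝ)^2 := by
    intro n hn
    have h1 : (1:ℤ) ≤ |n| := Int.one_le_abs hn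
    have h1' : (1:ℝ) ≤ |(n:ℝ)| := by
      rw [← Int.cast_abs]
      exact_mod_cast h1
    nlinarith [abs_nonneg (n:ℝ), sq_abs (n:ℝ)]
  have hrpos : ∀ n : ℤ, (0:ℝ) < Real.sqrt ((n:ℝ)^2 + ε) :=
    fun n => Real.sqrt_pos.mpr (by positivity)
  have habs_le : ∀ n : ℤ, |(n:ℝ)| ≤ Real.sqrt ((n:ℝ)^2 + ε) := by
    intro n
    rw [show |(n:ℝ)| = Real.sqrt ((n:ℝ)^2) by rw [Real.sqrt_sq_eq_abs]]
    exact Real.sqrt_le_sqrt (by linarith)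
  have hgap : ∀ n : ℤ, (n:ℝ)^2 - lam n ≤ 2*a*|(n:ℝ)| := by
    intro n
    have hdiv : (n:ℝ)^2 / Real.sqrt ((n:ℝ)^2 + ε) ≤ |(n:ℝ)| := by
      rw [div_le_iff₀ (hrpos n)]
      calc (n:ℝ)^2 = |(n:ℝ)| * |(n:ℝ)| := by
            rw [← abs_mul, abs_of_nonneg (mul_self_nonneg (n:ℝ))]; ring
        _ ≤ |(n:ℝ)| * Real.sqrt ((n:ℝ)^2 + ε) :=
            mul_le_mul_of_nonneg_left (habs_le n) (abs_nonneg _)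
    have hl : lam n = (n:ℝ)^2 - 2*a*((n:ℝ)^2 / Real.sqrt ((n:ℝ)^2 + ε)) := by
      rw [hlam]; ring
    rw [hl]
    nlinarith
  have hLlb : ∀ n : ℤ, n ≠ 0 → e1 * (n:ℝ)^2 ≤ lam n := by
    intro n hn
    have hsle : Real.sqrt (1 + ε) ≤ Real.sqrt ((n:ℝ)^2 + ε) :=
      Real.sqrt_le_sqrt (by linarith [hsq1 n hn])
    have hdivle : 2*a / Real.sqrt ((n:ℝ)^2 + ε) ≤ 2*a / Real.sqrt (1 + ε) := by
      gcongr <;> linarith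
    have hfac : e1 ≤ 1 - 2*a / Real.sqrt ((n:ℝ)^2 + ε) := by
      rw [he1]; linarith
    have hl : lam n = (n:ℝ)^2 * (1 - 2*a / Real.sqrt ((n:ℝ)^2 + ε)) := by
      rw [hlam]; ring
    rw [hl]
    nlinarith [sq_nonneg (n:ℝ)]
  have hLle : ∀ n : ℤ, lam n ≤ (n:ℝ)^2 := by
    intro n
    have h : 0 ≤ 2*a*(n:ℝ)^2 / Real.sqrt ((n:ℝ)^2 + ε) := by positivity
    rw [hlam]; simp only; linarith
  have hlam0 : lam 0 = 0 := by rw [hlam]; norm_num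
  set f : ℤ → ℂ := fun n =>
    Complex.exp (-((lam n * t : ℝ) : ℂ)) * Complex.exp (Complex.I * (n : ℂ) * (φ : ℂ)) with hfdef
  set g : ℤ → ℂ := fun n =>
    Complex.exp (-(((n:ℝ)^2 * t : ℝ) : ℂ)) * Complex.exp (Complex.I * (n : ℂ) * (φ : ℂ)) with hgdef
  have hosc : ∀ n : ℤ, ‖Complex.exp (Complex.I * (n : ℂ) * (φ : ℂ))‖ = 1 := by
    intro n
    rw [show Complex.I * (n : ℂ) * (φ : ℂ) = (((n:ℝ) * φ : ℝ) : ℂ) * Complex.I by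
      push_cast; ring]
    exact Complex.norm_exp_ofReal_mul_I _
  have hexpreal : ∀ x : ℝ, Complex.exp (-((x : ℝ) : ℂ)) = ((Real.exp (-x) : ℝ) : ℂ) := by
    intro x
    rw [Complex.ofReal_exp, Complex.ofReal_neg]
  have hnormf : ∀ n : ℤ, ‖f n‖ = Real.exp (-(lam n * t)) := by
    intro n
    rw [hfdef]
    simp only
    rw [hexpreal, norm_mul, hosc, Complex.norm_real, Real.norm_eq_abs,
      abs_of_pos (Real.exp_pos _), mul_one]
  have hnormg : ∀ n : ℤ, ‖g n‖ = Real.exp (-((n:ℝ)^2 * t)) := by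
    intro n
    rw [hgdef]
    simp only
    rw [hexpreal, norm_mul, hosc, Complex.norm_real, Real.norm_eq_abs,
      abs_of_pos (Real.exp_pos _), mul_one]
  set B : ℤ → ℝ := fun n => 2*a*t*|(n:ℝ)| * Real.exp (-(e1 * (n:ℝ)^2 * t)) with hBdef
  have hBnonneg : ∀ n : ℤ, 0 ≤ B n := by intro n; rw [hBdef]; positivity
  have hfgB : ∀ n : ℤ, ‖f n - g n‖ ≤ B n := by
    intro n
    have hdiff : f n - g n =
        ((Real.exp (-(lam n * t)) - Real.exp (-((n:ℝ)^2 * t)) : ℝ) : ℂ) *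
          Complex.exp (Complex.I * (n : ℂ) * (φ : ℂ)) := by
      rw [hfdef, hgdef]
      simp only
      rw [hexpreal, hexpreal]
      push_cast
      ring
    rw [hdiff, norm_mul, hosc, mul_one, Complex.norm_real, Real.norm_eq_abs]
    by_cases hn : n = 0
    · subst hn
      rw [hlam0]
      simp [hBdef]
    · have hle : lam n * t ≤ (n:ℝ)^2 * t :=
        mul_le_mul_of_nonneg_right (hLle n) ht.le
      have hnonneg : 0 ≤ Real.exp (-(lam n * t)) - Real.exp (-((n:ℝ)^2 * t)) := by
        have := Real.exp_le_exp.mpr (neg_le_neg hle)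
        linarith
      rw [abs_of_nonneg hnonneg]
      calc Real.exp (-(lam n * t)) - Real.exp (-((n:ℝ)^2 * t))
          ≤ ((n:ℝ)^2 * t - lam n * t) * Real.exp (-(lam n * t)) :=
            hk_exp_sub_exp _ _ hle
        _ ≤ (2*a*|(n:ℝ)| * t) * Real.exp (-(e1 * (n:ℝ)^2 * t)) := by
            refine mul_le_mul ?_ ?_ (Real.exp_pos _).le (by positivity)
            · have := hgap n
              nlinarith
            · refine Real.exp_le_exp.mpr ?_
              have := hLlb n hn
              nlinarith
        _ = B n := by rw [hBdef]; ring
  obtain ⟨hKsum, hKbound⟩ := hk_aux_key2 e1 t hε₁ ht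
  set K : ℕ → ℝ := fun j => ((j:ℝ)+1) * Real.exp (-(e1 * (j:ℝ)^2 * t)) with hKdef
  set cst : ℝ := 2*a*t*Real.exp (-(e1*t)) with hcst
  have hcstpos : 0 < cst := by rw [hcst]; positivity
  have hBsucc : ∀ m : ℕ, B ((m:ℤ) + 1) ≤ cst * K m := by
    intro m
    rw [hBdef, hKdef, hcst]
    simp only
    push_cast
    rw [abs_of_nonneg (by positivity : (0:ℝ) ≤ (m:ℝ)+1)]
    have hexp : Real.exp (-(e1 * ((m:ℝ)+1)^2 * t)) ≤
        Real.exp (-(e1*t)) * Real.exp (-(e1 * (m:ℝ)^2 * t)) := by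
      rw [← Real.exp_add]
      refine Real.exp_le_exp.mpr ?_
      nlinarith [mul_nonneg (mul_nonneg hε₁.le ht.le) (Nat.cast_nonneg (α := ℝ) m)]
    calc 2*a*t*((m:ℝ)+1) * Real.exp (-(e1 * ((m:ℝ)+1)^2 * t))
        ≤ 2*a*t*((m:ℝ)+1) * (Real.exp (-(e1*t)) * Real.exp (-(e1 * (m:ℝ)^2 * t))) :=
          mul_le_mul_of_nonneg_left hexp (by positivity)
      _ = 2*a*t*Real.exp (-(e1*t)) * (((m:ℝ)+1) * Real.exp (-(e1 * (m:ℝ)^2 * t))) := by ring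
  have hBneg : ∀ m : ℕ, B (-((m:ℤ) + 1)) = B ((m:ℤ) + 1) := by
    intro m
    rw [hBdef]
    simp only
    push_cast
    rw [abs_neg, neg_pow, show ((-1:ℝ))^2 = 1 by norm_num]
    ring_nf
  have hcK : Summable (fun m : ℕ => cst * K m) := hKsum.mul_left cst
  have hBnat_succ : Summable (fun m : ℕ => B ((m:ℤ) + 1)) :=
    Summable.of_nonneg_of_le (fun m => hBnonneg _) hBsucc hcK
  have hBnat : Summable (fun m : ℕ => B (m:ℤ)) := by
    refine (summable_nat_add_iff 1).mp ?_
    exact hBnat_succ.congr fun m => congrArg B (by push_cast; ring)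
  have hBnegsum : Summable (fun m : ℕ => B (-((m:ℤ) + 1))) :=
    hBnat_succ.congr fun m => (hBneg m).symm
  have hBsummable : Summable B := Summable.of_nat_of_neg_add_one hBnat hBnegsum
  have htailbound : ∑' m : ℕ, B ((m:ℤ) + 1) ≤ cst * (1 + 2/(e1*t)) := by
    calc ∑' m : ℕ, B ((m:ℤ) + 1) ≤ ∑' m : ℕ, cst * K m :=
          Summable.tsum_le_tsum hBsucc hBnat_succ hcK
      _ = cst * ∑' m : ℕ, K m := tsum_mul_left
      _ ≤ cst * (1 + 2/(e1*t)) := mul_le_mul_of_nonneg_left hKbound hcstpos.le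
  have htsumBnat : ∑' m : ℕ, B (m:ℤ) ≤ cst * (1 + 2/(e1*t)) := by
    rw [Summable.tsum_eq_zero_add hBnat]
    have h0 : B ((0:ℕ):ℤ) = 0 := by rw [hBdef]; norm_num
    rw [h0, zero_add]
    calc ∑' m : ℕ, B (((m+1:ℕ)):ℤ) = ∑' m : ℕ, B ((m:ℤ) + 1) :=
          tsum_congr fun m => congrArg B (by push_cast; ring)
      _ ≤ cst * (1 + 2/(e1*t)) := htailbound
  have htsumBneg : ∑' m : ℕ, B (-((m:ℤ) + 1)) ≤ cst * (1 + 2/(e1*t)) := by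
    calc ∑' m : ℕ, B (-((m:ℤ) + 1)) = ∑' m : ℕ, B ((m:ℤ) + 1) := tsum_congr hBneg
      _ ≤ cst * (1 + 2/(e1*t)) := htailbound
  have htsumB : ∑' n : ℤ, B n ≤ 2 * (cst * (1 + 2/(e1*t))) := by
    rw [tsum_of_nat_of_neg_add_one hBnat hBnegsum]
    linarith
  -- summability of f and g
  have hnatAbs_le : ∀ n : ℤ, (n.natAbs : ℝ) ≤ (n:ℝ)^2 := fun n => hk_natAbs_le_sq n
  have hsummf : Summable f := by
    refine hk_summable_int (r := Real.exp (-(e1*t))) (Real.exp_pos _).le ?_ (fun n => ?_)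
    · rw [Real.exp_lt_one_iff]; nlinarith
    · rw [hnormf, ← Real.exp_nat_mul]
      refine Real.exp_le_exp.mpr ?_
      by_cases hn : n = 0
      · subst hn; rw [hlam0]; norm_num
      · have h1 : e1 * (n:ℝ)^2 ≤ lam n := hLlb n hn
        have h2 : (n.natAbs : ℝ) ≤ (n:ℝ)^2 := hnatAbs_le n
        nlinarith [mul_nonneg hε₁.le ht.le]
  have hsummg : Summable g := by
    refine hk_summable_int (r := Real.exp (-t)) (Real.exp_pos _).le ?_ (fun n => ?_)
    · rw [Real.exp_lt_one_iff]; linarith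
    · rw [hnormg, ← Real.exp_nat_mul]
      refine Real.exp_le_exp.mpr ?_
      have h2 : (n.natAbs : ℝ) ≤ (n:ℝ)^2 := hnatAbs_le n
      nlinarith
  have hsummfg_norm : Summable (fun n : ℤ => ‖f n - g n‖) :=
    Summable.of_nonneg_of_le (fun n => norm_nonneg _) hfgB hBsummable
  -- assemble
  have h1 : heatKernelTa a ε t φ = (1 / (2 * (π : ℂ))) * ∑' n : ℤ, f n := rfl
  have h2 : heatKernelCircle t φ = (1 / (2 * (π : ℂ))) * ∑' n : ℤ, g n := rfl
  have hnormconst : ‖(1 / (2 * (π : ℂ)))‖ ≤ 1 := by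
    rw [show (1 / (2 * (π : ℂ))) = ((1/(2*π) : ℝ) : ℂ) by push_cast; ring]
    rw [Complex.norm_real, Real.norm_eq_abs, abs_of_pos (by positivity)]
    rw [div_le_one (by positivity)]
    linarith [Real.pi_gt_three]
  have hmain : ‖heatKernelTa a ε t φ - heatKernelCircle t φ‖ ≤ ∑' n : ℤ, B n := by
    rw [h1, h2, ← mul_sub, norm_mul]
    calc ‖(1 / (2 * (π : ℂ)))‖ * ‖(∑' n : ℤ, f n) - ∑' n : ℤ, g n‖
        ≤ 1 * ‖(∑' n : ℤ, f n) - ∑' n : ℤ, g n‖ :=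
          mul_le_mul_of_nonneg_right hnormconst (norm_nonneg _)
      _ = ‖∑' n : ℤ, (f n - g n)‖ := by rw [one_mul, Summable.tsum_sub hsummf hsummg]
      _ ≤ ∑' n : ℤ, ‖f n - g n‖ := norm_tsum_le_tsum_norm hsummfg_norm
      _ ≤ ∑' n : ℤ, B n := Summable.tsum_le_tsum hfgB hsummfg_norm hBsummable
  have harith : 2 * (cst * (1 + 2/(e1*t))) ≤
      (4 * a + 8 * a / e1) * (1 + t) * Real.exp (-(e1 * t)) := by
    have hE : 0 < Real.exp (-(e1*t)) := Real.exp_pos _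
    have hkey : 2 * (cst * (1 + 2/(e1*t))) = (4*a*t + 8*a/e1) * Real.exp (-(e1*t)) := by
      rw [hcst]
      field_simp
      ring
    rw [hkey]
    refine mul_le_mul_of_nonneg_right ?_ hE.le
    have hd : 0 ≤ 8*a/e1 := div_nonneg (by linarith) hε₁.le
    nlinarith [mul_nonneg hd ht.le]
  calc ‖heatKernelTa a ε t φ - heatKernelCircle t φ‖ ≤ ∑' n : ℤ, B n := hmain
    _ ≤ 2 * (cst * (1 + 2/(e1*t))) := htsumB
    _ ≤ (4 * a + 8 * a / e1) * (1 + t) * Real.exp (-(e1 * t)) := harith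
    _ = (4 * a + 8 * a / e1) * (1 + t) * Real.exp (-e1 * t) := by rw [neg_mul]
end

section
/- Let 0 < a ≤ 1/2 and ε > 0. There exists a constant C = C(ε, a) > 0 such that for all t > 0 and all θ, θ' with |θ − θ'| ≤ π, |k_a(t, θ − θ') − h(t, θ − θ')| ≤ C, where k_a(t, φ) = (1/2π) Σ_{n∈ℤ} e^{−(n² − 2an²/√(n²+ε)) t} e^{inφ} and h(t, φ) = (1/2π) Σ_{n∈ℤ} e^{−n² t} e^{inφ}. -/
open MeasureTheory Real

/-- the perturbation term is between 0 and |x| -/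
lemma hk_pert_bounds (a ε : ℝ) (ha0 : 0 < a) (ha1 : a ≤ 1 / 2) (hε : 0 < ε) (x : ℝ) :
    0 ≤ 2 * a * x ^ 2 / Real.sqrt (x ^ 2 + ε) ∧
      2 * a * x ^ 2 / Real.sqrt (x ^ 2 + ε) ≤ |x| := by
  constructor
  · positivity
  · rcases eq_or_ne x 0 with h | h
    · simp [h]
    · have hx : 0 < |x| := abs_pos.mpr h
      have hs : |x| ≤ Real.sqrt (x ^ 2 + ε) := by
        rw [← Real.sqrt_sq_eq_abs]
        exact Real.sqrt_le_sqrt (by linarith)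
      have h1 : 2 * a * x ^ 2 ≤ x ^ 2 := by nlinarith [sq_nonneg x]
      calc 2 * a * x ^ 2 / Real.sqrt (x ^ 2 + ε) ≤ x ^ 2 / |x| :=
            div_le_div₀ (by positivity) h1 hx hs
        _ = |x| := by
            rw [← sq_abs, pow_two, mul_div_assoc, div_self hx.ne', mul_one]


/-- Uniform comparison of the heat kernels of `T_a` and of `Δ_{𝕊¹}`: for
`0 < a ≤ 1/2` and `ε > 0` there is `C = C(ε, a) > 0` such that
`|k_a(t, θ-θ') - h(t, θ-θ')| ≤ C` for all `t > 0` and `|θ - θ'| ≤ π`. -/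
theorem heat_kernel_comparison_uniform (a ε : ℝ) (ha0 : 0 < a) (ha1 : a ≤ 1 / 2)
    (hε : 0 < ε) :
    ∃ C > 0, ∀ t : ℝ, 0 < t → ∀ θ θ' : ℝ, |θ - θ'| ≤ π →
      ‖heatKernelTa a ε t (θ - θ') - heatKernelCircle t (θ - θ')‖ ≤ C := by
  refine ⟨1, one_pos, ?_⟩
  intro t ht θ θ' _
  set φ := θ - θ' with hφ
  set lam : ℤ → ℝ := fun n =>
    (n : ℝ) ^ 2 - 2 * a * (n : ℝ) ^ 2 / Real.sqrt ((n : ℝ) ^ 2 + ε) with hlam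
  -- basic bounds on lam
  have hlam_le : ∀ n : ℤ, lam n ≤ (n : ℝ) ^ 2 := by
    intro n
    have := (hk_pert_bounds a ε ha0 ha1 hε (n : ℝ)).1
    simp only [hlam]; linarith
  have hlam_ge : ∀ n : ℤ, (n : ℝ) ^ 2 - |(n : ℝ)| ≤ lam n := by
    intro n
    have := (hk_pert_bounds a ε ha0 ha1 hε (n : ℝ)).2
    simp only [hlam]; linarith
  set F : ℤ → ℝ := fun n => rexp (-(lam n * t)) with hF
  set G : ℤ → ℝ := fun n => rexp (-((n : ℝ) ^ 2 * t)) with hG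
  have hGF : ∀ n, G n ≤ F n := fun n =>
    Real.exp_le_exp.mpr (by nlinarith [hlam_le n])
  have hF0 : ∀ n, 0 < F n := fun n => Real.exp_pos _
  have hG0 : ∀ n, 0 < G n := fun n => Real.exp_pos _
  -- geometric domination for summability
  have hr : rexp (-t) < 1 := Real.exp_lt_one_iff.mpr (by linarith)
  have hr0 : 0 ≤ rexp (-t) := (Real.exp_pos _).le
  have hdom : ∀ n : ℤ, F n ≤ rexp t * rexp (-t) ^ n.natAbs := by
    intro n
    have h1 : (n : ℝ) ^ 2 - |(n : ℝ)| ≥ |(n : ℝ)| - 1 := by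
      nlinarith [sq_nonneg (|(n : ℝ)| - 1), sq_abs (n : ℝ)]
    have h2 : |(n : ℝ)| - 1 ≤ lam n := le_trans h1 (hlam_ge n)
    have h3 : -(lam n * t) ≤ t - |(n : ℝ)| * t := by nlinarith
    have habs : |(n : ℝ)| = (n.natAbs : ℝ) := by
      rw [Nat.cast_natAbs, Int.cast_abs]
    calc F n ≤ rexp (t - |(n : ℝ)| * t) := Real.exp_le_exp.mpr h3
      _ = rexp t * rexp (-t) ^ n.natAbs := by
          rw [← Real.exp_nat_mul, ← Real.exp_add, habs]
          ring_nf
  have hdom' : ∀ n : ℤ, G n ≤ rexp t * rexp (-t) ^ n.natAbs := fun n =>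
    le_trans (hGF n) (hdom n)
  have hgeoZ : Summable fun n : ℤ => rexp t * rexp (-t) ^ n.natAbs := by
    apply Summable.of_nat_of_neg_add_one
    · simpa using (summable_geometric_of_lt_one hr0 hr).mul_left (rexp t)
    · have hnab : ∀ n : ℕ, ((-(n + 1) : ℤ)).natAbs = n + 1 := by intro n; omega
      simp only [hnab]
      have h1 : Summable fun n : ℕ => rexp t * rexp (-t) ^ n :=
        (summable_geometric_of_lt_one hr0 hr).mul_left (rexp t)
      exact (summable_nat_add_iff (f := fun n : ℕ => rexp t * rexp (-t) ^ n) 1).mpr h1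
  have hFs : Summable F :=
    Summable.of_nonneg_of_le (fun n => (hF0 n).le) hdom hgeoZ
  have hGs : Summable G :=
    Summable.of_nonneg_of_le (fun n => (hG0 n).le) hdom' hgeoZ
  -- complex summands
  set e : ℤ → ℂ := fun n => Complex.exp (Complex.I * (n : ℂ) * (φ : ℂ)) with he
  have hnorme : ∀ n, ‖e n‖ = 1 := by
    intro n
    rw [he]
    simp only [Complex.norm_exp]
    norm_num [Complex.mul_re, Complex.mul_im]
  set f : ℤ → ℂ := fun n => ((F n : ℝ) : ℂ) * e n with hf
  set g : ℤ → ℂ := fun n => ((G n : ℝ) : ℂ) * e n with hg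
  have hnormf : ∀ n, ‖f n‖ = F n := by
    intro n; rw [hf]
    simp [norm_mul, hnorme n, abs_of_pos (hF0 n)]
  have hnormg : ∀ n, ‖g n‖ = G n := by
    intro n; rw [hg]
    simp [norm_mul, hnorme n, abs_of_pos (hG0 n)]
  have hfs : Summable f := by
    apply Summable.of_norm
    simpa only [hnormf] using hFs
  have hgs : Summable g := by
    apply Summable.of_norm
    simpa only [hnormg] using hGs
  -- identify the kernels with sums of f and g
  have hka : heatKernelTa a ε t φ = (1 / (2 * (π : ℂ))) * ∑' n : ℤ, f n := by
    rw [heatKernelTa]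
    congr 1
    apply tsum_congr
    intro n
    rw [hf]
    congr 1
    rw [hF]
    simp only [hlam]
    rw [Complex.ofReal_exp, Complex.ofReal_neg]
  have hh : heatKernelCircle t φ = (1 / (2 * (π : ℂ))) * ∑' n : ℤ, g n := by
    rw [heatKernelCircle]
    congr 1
    apply tsum_congr
    intro n
    rw [hg]
    congr 1
    rw [hG]
    rw [Complex.ofReal_exp, Complex.ofReal_neg]
  -- difference
  have hdiff : heatKernelTa a ε t φ - heatKernelCircle t φ
      = (1 / (2 * (π : ℂ))) * ∑' n : ℤ, (f n - g n) := by
    rw [hka, hh, ← mul_sub, hfs.tsum_sub hgs]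
  -- norm of each difference term
  have hnormfg : ∀ n, ‖f n - g n‖ = F n - G n := by
    intro n
    rw [hf, hg, ← sub_mul, norm_mul, hnorme n, mul_one, ← Complex.ofReal_sub,
      Complex.norm_real, Real.norm_eq_abs, abs_of_nonneg (by linarith [hGF n])]
  have hFGs : Summable fun n => F n - G n := hFs.sub hGs
  -- key telescoping bound : ∑' (F - G) ≤ 2
  set Q : ℕ → ℝ := fun i => rexp (-((i : ℝ) ^ 2 * t)) with hQ
  have hS : ∑' n : ℕ, (F (n + 1 : ℕ) - G (n + 1 : ℕ)) ≤ 1 := by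
    apply Real.tsum_le_of_sum_range_le
    · intro n
      have := hGF (n + 1 : ℕ)
      linarith
    · intro N
      have hterm : ∀ i ∈ Finset.range N,
          F ((i : ℤ) + 1) - G ((i : ℤ) + 1) ≤ Q i - Q (i + 1) := by
        intro i _
        have h1 : ((i : ℝ)) ^ 2 ≤ lam ((i : ℤ) + 1) := by
          have h2 := hlam_ge ((i : ℤ) + 1)
          have h3 : |((((i : ℤ) + 1) : ℝ))| = (i : ℝ) + 1 := by
            push_cast
            rw [abs_of_nonneg (by positivity)]
          push_cast at h2 h3 ⊢
          nlinarith [h2, h3]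
        have hFle : F ((i : ℤ) + 1) ≤ Q i := by
          rw [hF, hQ]
          apply Real.exp_le_exp.mpr
          nlinarith
        have hGeq : G ((i : ℤ) + 1) = Q (i + 1) := by
          rw [hG, hQ]; push_cast; ring_nf
        push_cast
        push_cast at hFle hGeq
        linarith
      calc ∑ i ∈ Finset.range N, (F ((i : ℕ) + 1) - G ((i : ℕ) + 1))
          ≤ ∑ i ∈ Finset.range N, (Q i - Q (i + 1)) := by
            apply Finset.sum_le_sum
            intro i hi
            have := hterm i hi
            push_cast at this ⊢
            exact this
        _ = Q 0 - Q N := Finset.sum_range_sub' Q N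
        _ ≤ 1 := by
            have : Q 0 = 1 := by rw [hQ]; norm_num
            have h2 : 0 < Q N := Real.exp_pos _
            linarith
  have hsymF : ∀ n : ℕ, F (-((n : ℤ) + 1)) = F ((n : ℤ) + 1) := by
    intro n
    rw [hF]
    simp only [hlam]
    push_cast
    ring_nf
  have hsymG : ∀ n : ℕ, G (-((n : ℤ) + 1)) = G ((n : ℤ) + 1) := by
    intro n
    rw [hG]
    push_cast
    ring_nf
  have hFGnat : Summable fun n : ℕ => F (n : ℤ) - G (n : ℤ) := by
    have := hFGs.comp_injective (fun x y h => by omega : Function.Injective (Nat.cast : ℕ → ℤ))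
    exact this
  have hFGnat1 : Summable fun n : ℕ => F ((n : ℤ) + 1) - G ((n : ℤ) + 1) := by
    have := (summable_nat_add_iff (f := fun n : ℕ => F (n : ℤ) - G (n : ℤ)) 1).mpr hFGnat
    convert this using 2 with n
    all_goals rfl
  have hFGneg : Summable fun n : ℕ => F (-((n : ℤ) + 1)) - G (-((n : ℤ) + 1)) := by
    simp only [hsymF, hsymG]
    exact hFGnat1
  have htsum2 : ∑' n : ℤ, (F n - G n) ≤ 2 := by
    rw [tsum_of_nat_of_neg_add_one (f := fun n : ℤ => F n - G n) hFGnat hFGneg]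
    have h1 : ∑' n : ℕ, (F (n : ℤ) - G (n : ℤ)) ≤ 1 := by
      rw [hFGnat.tsum_eq_zero_add]
      have h00 : F (((0 : ℕ) : ℤ)) - G (((0 : ℕ) : ℤ)) = 0 := by
        rw [hF, hG]
        norm_num [hlam]
      rw [h00, zero_add]
      exact hS
    have h2 : ∑' n : ℕ, (F (-((n : ℤ) + 1)) - G (-((n : ℤ) + 1))) ≤ 1 := by
      simp only [hsymF, hsymG]
      simpa using hS
    push_cast at h1 h2 ⊢
    linarith
  -- put everything together
  rw [hdiff, norm_mul]
  have hnc : ‖(1 / (2 * (π : ℂ)))‖ = 1 / (2 * π) := by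
    rw [norm_div, norm_one]
    have : (2 * (π : ℂ)) = ((2 * π : ℝ) : ℂ) := by push_cast; ring
    rw [this, Complex.norm_real, Real.norm_eq_abs, abs_of_pos (by positivity)]
  have hnorm_sum : ‖∑' n : ℤ, (f n - g n)‖ ≤ 2 := by
    calc ‖∑' n : ℤ, (f n - g n)‖ ≤ ∑' n : ℤ, ‖f n - g n‖ :=
          norm_tsum_le_tsum_norm (by simpa only [hnormfg] using hFGs)
      _ = ∑' n : ℤ, (F n - G n) := tsum_congr hnormfg
      _ ≤ 2 := htsum2
  rw [hnc]
  have hπ : (3 : ℝ) ≤ π := by linarith [Real.pi_gt_three]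
  calc 1 / (2 * π) * ‖∑' n : ℤ, (f n - g n)‖ ≤ 1 / (2 * π) * 2 := by
        apply mul_le_mul_of_nonneg_left hnorm_sum (by positivity)
    _ ≤ 1 := by
        rw [div_mul_eq_mul_div, one_mul]
        rw [div_le_one (by positivity)]
        linarith
end

section
/- Let 0 < a ≤ 1/2, λ > −a², 0 < ε < (λ + a²)/a, and 0 < λ' < λ + a² − aε. Then for every integer n, n² − 2a n²/√(n² + ε) + λ' ≤ (n − a)² + λ. Equivalently, a² − 2an + 2a n²/√(n² + ε) + λ − λ' ≥ 0 for all n ∈ ℤ; in particular, for every ε > 0 and every integer n ≥ 1, n²/√(n² + ε) − n > −ε/2. -/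
open Real

lemma key_ineq (ε : ℝ) (hε : 0 < ε) (x : ℝ) (hx : 1 ≤ x) :
    -ε / 2 < x ^ 2 / Real.sqrt (x ^ 2 + ε) - x := by
  set s := Real.sqrt (x ^ 2 + ε) with hsdef
  have hpos : (0:ℝ) < x ^ 2 + ε := by nlinarith
  have hs2 : s ^ 2 = x ^ 2 + ε := Real.sq_sqrt hpos.le
  have hs : 0 < s := Real.sqrt_pos.2 hpos
  have hsx : x < s := by
    have : x = Real.sqrt (x ^ 2) := by rw [Real.sqrt_sq (by linarith)]
    rw [this, hsdef]
    exact Real.sqrt_lt_sqrt (by positivity) (by linarith)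
  rw [show x ^ 2 / s - x = (x ^ 2 - x * s) / s by field_simp, lt_div_iff₀ hs]
  nlinarith [mul_nonneg (sub_pos.2 hsx).le (show (0:ℝ) ≤ s * (s + x) - 2 * x by nlinarith)]

/-- The Fourier-multiplier inequality comparing the Aharonov–Bohm magnetic form
with the form of `-∂_w² - T_a + λ'`: for `0 < a ≤ 1/2`, `λ > -a²`,
`0 < ε < (λ + a²)/a` and `0 < λ' < λ + a² - aε`, one has
`n² - 2an²/√(n²+ε) + λ' ≤ (n-a)² + λ` for every `n ∈ ℤ`; equivalently
`a² - 2an + 2an²/√(n²+ε) + λ - λ' ≥ 0` for all `n ∈ ℤ`.  Moreover for every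
`ε > 0` and every integer `n ≥ 1`, `n²/√(n²+ε) - n > -ε/2`. -/
theorem fourier_mode_inequality (a lam ε lam' : ℝ) (ha0 : 0 < a) (ha1 : a ≤ 1 / 2)
    (hlam : -a ^ 2 < lam) (hε0 : 0 < ε) (hε1 : ε < (lam + a ^ 2) / a)
    (hl0 : 0 < lam') (hl1 : lam' < lam + a ^ 2 - a * ε) :
    (∀ n : ℤ,
      (n : ℝ) ^ 2 - 2 * a * (n : ℝ) ^ 2 / Real.sqrt ((n : ℝ) ^ 2 + ε) + lam' ≤
        ((n : ℝ) - a) ^ 2 + lam) ∧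
    (∀ n : ℤ,
      0 ≤ a ^ 2 - 2 * a * (n : ℝ) +
        2 * a * (n : ℝ) ^ 2 / Real.sqrt ((n : ℝ) ^ 2 + ε) + lam - lam') ∧
    (∀ ε' : ℝ, 0 < ε' → ∀ n : ℤ, 1 ≤ n →
      -ε' / 2 < (n : ℝ) ^ 2 / Real.sqrt ((n : ℝ) ^ 2 + ε') - (n : ℝ)) := by
  have h2 : ∀ n : ℤ,
      0 ≤ a ^ 2 - 2 * a * (n : ℝ) +
        2 * a * (n : ℝ) ^ 2 / Real.sqrt ((n : ℝ) ^ 2 + ε) + lam - lam' := by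
    intro n
    have hs : 0 < Real.sqrt ((n : ℝ) ^ 2 + ε) := Real.sqrt_pos.2 (by positivity)
    rcases le_or_gt (n : ℝ) 0 with hn | hn
    · have h1 : 0 ≤ 2 * a * (n : ℝ) ^ 2 / Real.sqrt ((n : ℝ) ^ 2 + ε) := by positivity
      nlinarith
    · have hn1 : (1 : ℝ) ≤ (n : ℝ) := by
        have : (1 : ℤ) ≤ n := by exact_mod_cast Int.lt_iff_add_one_le.1 (by exact_mod_cast hn : (0:ℤ) < n)
        exact_mod_cast this
      have hk := key_ineq ε hε0 (n : ℝ) hn1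
      have : 2 * a * (n : ℝ) ^ 2 / Real.sqrt ((n : ℝ) ^ 2 + ε) =
          2 * a * ((n : ℝ) ^ 2 / Real.sqrt ((n : ℝ) ^ 2 + ε)) := by ring
      rw [this]
      nlinarith
  refine ⟨fun n => ?_, h2, fun ε' hε' n hn => key_ineq ε' hε' (n : ℝ) (by exact_mod_cast hn)⟩
  have := h2 n
  have hrw : 2 * a * (n : ℝ) ^ 2 / Real.sqrt ((n : ℝ) ^ 2 + ε) =
      2 * a * ((n : ℝ) ^ 2 / Real.sqrt ((n : ℝ) ^ 2 + ε)) := by ring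
  nlinarith [this]
end

section
/- Let w, w' > 0 and c ∈ ℝ with (w − w')² + c² > 0. Then ∫_0^π √(ww') / (w² + w'² − 2ww' cos ϑ + c²) dϑ = π √(ww') / ( √((w + w')² + c²) · √((w − w')² + c²) ), and consequently this integral is at most (π/2) ((w − w')² + c²)^{−1/2}. -/
open MeasureTheory Real
open Filter Topology

lemma cos_key (a b : ℝ) (hb : 0 ≤ b) (hab : b < a) :
    (∫ θ in Set.Ioo (0 : ℝ) π, (a - b * Real.cos θ)⁻¹)
      = π / (Real.sqrt (a + b) * Real.sqrt (a - b)) := by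
  have ha : 0 < a := lt_of_le_of_lt hb hab
  have hpos : ∀ θ : ℝ, 0 < a - b * Real.cos θ := by
    intro θ
    have h1 : b * Real.cos θ ≤ b * 1 := by
      nlinarith [Real.cos_le_one θ, Real.neg_one_le_cos θ]
    nlinarith
  set sp := Real.sqrt (a + b) with hsp
  set sm := Real.sqrt (a - b) with hsm
  have hspp : 0 < sp := Real.sqrt_pos.mpr (by linarith)
  have hsmp : 0 < sm := Real.sqrt_pos.mpr (by linarith)
  have hsp2 : sp ^ 2 = a + b := Real.sq_sqrt (by linarith)
  have hsm2 : sm ^ 2 = a - b := Real.sq_sqrt (by linarith)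
  set f : ℝ → ℝ := fun θ => (a - b * Real.cos θ)⁻¹ with hf
  have hfc : Continuous f := by
    apply Continuous.inv₀ (by continuity)
    intro θ; exact (hpos θ).ne'
  set F : ℝ → ℝ := fun θ => (2 / (sp * sm)) * Real.arctan ((sp / sm) * Real.tan (θ / 2)) with hF
  -- derivative of F on [0, π)
  have hderiv : ∀ θ ∈ Set.Ico (0 : ℝ) π, HasDerivAt F (f θ) θ := by
    intro θ hθ
    have hc2 : 0 < Real.cos (θ / 2) := by
      apply Real.cos_pos_of_mem_Ioo
      constructor <;> [linarith [hθ.1, Real.pi_pos]; linarith [hθ.2]]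
    have htan : HasDerivAt (fun x : ℝ => Real.tan (x / 2)) (1 / Real.cos (θ / 2) ^ 2 * (1 / 2)) θ := by
      have := (Real.hasDerivAt_tan hc2.ne').comp θ ((hasDerivAt_id θ).div_const 2)
      simpa [Function.comp_def] using this
    have harc := (Real.hasDerivAt_arctan ((sp / sm) * Real.tan (θ / 2))).comp θ
      ((htan.const_mul (sp / sm)))
    have h := harc.const_mul (2 / (sp * sm))
    convert h using 1 <;> [rfl; rfl; rfl; skip]
    have ht : Real.tan (θ / 2) = Real.sin (θ / 2) / Real.cos (θ / 2) := Real.tan_eq_sin_div_cos _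
    have hcos : Real.cos θ = 2 * Real.cos (θ / 2) ^ 2 - 1 := by
      have h2 := Real.cos_sq (θ / 2)
      rw [show 2 * (θ / 2) = θ by ring] at h2
      linarith
    have hden : a - b * Real.cos θ ≠ 0 := (hpos θ).ne'
    have hs2 : Real.sin (θ / 2) ^ 2 = 1 - Real.cos (θ / 2) ^ 2 := by
      nlinarith [Real.sin_sq_add_cos_sq (θ / 2)]
    rw [hcos] at hden
    simp only [hf, ht, hcos]
    have hne1 : (1 : ℝ) + (sp / sm * (Real.sin (θ / 2) / Real.cos (θ / 2))) ^ 2 ≠ 0 := by positivity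
    have ha' : a = (sp ^ 2 + sm ^ 2) / 2 := by rw [hsp2, hsm2]; ring
    have hb' : b = (sp ^ 2 - sm ^ 2) / 2 := by rw [hsp2, hsm2]; ring
    rw [ha', hb'] at hden ⊢
    rw [inv_eq_one_div, div_eq_iff hden]
    field_simp
    linear_combination (2 * sp ^ 2) * Real.sin_sq_add_cos_sq (θ / 2)
  have hFTC : ∀ x ∈ Set.Ico (0 : ℝ) π, (∫ t in (0:ℝ)..x, f t) = F x := by
    intro x hx
    have h0 : F 0 = 0 := by simp [hF]
    rw [intervalIntegral.integral_eq_sub_of_hasDerivAt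
      (fun t ht => hderiv t ?_) ((hfc.intervalIntegrable 0 x)), h0, sub_zero]
    rw [Set.uIcc_of_le hx.1] at ht
    exact ⟨ht.1, lt_of_le_of_lt ht.2 hx.2⟩
  -- limit of F at π from the left
  have hlim1 : Tendsto F (𝓝[<] π) (𝓝 (π / (sp * sm))) := by
    have t1 : Tendsto (fun x : ℝ => x / 2) (𝓝[<] π) (𝓝[<] (π / 2)) := by
      apply tendsto_nhdsWithin_of_tendsto_nhds_of_eventually_within
      · exact ((continuous_id.div_const 2).tendsto π).mono_left nhdsWithin_le_nhds
      · filter_upwards [self_mem_nhdsWithin] with x hx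
        simp only [Set.mem_Iio] at hx ⊢
        linarith
    have t2 : Tendsto (fun x : ℝ => Real.tan (x / 2)) (𝓝[<] π) atTop :=
      Real.tendsto_tan_pi_div_two.comp t1
    have t3 : Tendsto (fun x : ℝ => (sp / sm) * Real.tan (x / 2)) (𝓝[<] π) atTop :=
      t2.const_mul_atTop (by positivity)
    have t4 : Tendsto (fun x : ℝ => Real.arctan ((sp / sm) * Real.tan (x / 2))) (𝓝[<] π)
        (𝓝 (π / 2)) :=
      (Real.tendsto_arctan_atTop.mono_right nhdsWithin_le_nhds).comp t3
    have := t4.const_mul (2 / (sp * sm))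
    convert this using 2
    field_simp
  -- limit of primitive at π from the left
  have hG : Continuous (fun x => ∫ t in (0:ℝ)..x, f t) :=
    intervalIntegral.continuous_primitive (fun a b => hfc.intervalIntegrable a b) 0
  have hlim2 : Tendsto (fun x => ∫ t in (0:ℝ)..x, f t) (𝓝[<] π)
      (𝓝 (∫ t in (0:ℝ)..π, f t)) :=
    ((hG.tendsto π).mono_left nhdsWithin_le_nhds)
  have heq : (∫ t in (0:ℝ)..π, f t) = π / (sp * sm) := by
    refine tendsto_nhds_unique (hlim2.congr' ?_) hlim1
    filter_upwards [Ioo_mem_nhdsLT_of_mem (Set.mem_Ioc.mpr ⟨Real.pi_pos, le_refl π⟩)] with x hx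
    exact hFTC x ⟨hx.1.le, hx.2⟩
  rw [← heq, intervalIntegral.integral_of_le Real.pi_pos.le,
    MeasureTheory.integral_Ioc_eq_integral_Ioo]

/-- Evaluation of the hypergeometric-type integral
`∫_0^π √(ww') / (w² + w'² - 2ww' cos ϑ + c²) dϑ
  = π √(ww') / (√((w+w')² + c²) √((w-w')² + c²))`
for `w, w' > 0` and `(w-w')² + c² > 0`, together with the resulting bound
`≤ (π/2) ((w-w')² + c²)^{-1/2}`. -/
theorem cos_integral_eval (w w' c : ℝ) (hw : 0 < w) (hw' : 0 < w')
    (hne : 0 < (w - w') ^ 2 + c ^ 2) :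
    (∫ ϑ in Set.Ioo (0 : ℝ) π,
        Real.sqrt (w * w') / (w ^ 2 + w' ^ 2 - 2 * w * w' * Real.cos ϑ + c ^ 2)) =
      π * Real.sqrt (w * w') /
        (Real.sqrt ((w + w') ^ 2 + c ^ 2) * Real.sqrt ((w - w') ^ 2 + c ^ 2)) ∧
    (∫ ϑ in Set.Ioo (0 : ℝ) π,
        Real.sqrt (w * w') / (w ^ 2 + w' ^ 2 - 2 * w * w' * Real.cos ϑ + c ^ 2)) ≤
      (π / 2) * (Real.sqrt ((w - w') ^ 2 + c ^ 2))⁻¹ := by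
  set a : ℝ := w ^ 2 + w' ^ 2 + c ^ 2 with hadef
  set b : ℝ := 2 * w * w' with hbdef
  have hb : 0 ≤ b := by positivity
  have hab : b < a := by nlinarith
  have hPe : a + b = (w + w') ^ 2 + c ^ 2 := by ring
  have hMe : a - b = (w - w') ^ 2 + c ^ 2 := by ring
  have key := cos_key a b hb hab
  rw [hPe, hMe] at key
  have hint : (∫ ϑ in Set.Ioo (0 : ℝ) π,
      Real.sqrt (w * w') / (w ^ 2 + w' ^ 2 - 2 * w * w' * Real.cos ϑ + c ^ 2))
      = Real.sqrt (w * w') * (∫ θ in Set.Ioo (0 : ℝ) π, (a - b * Real.cos θ)⁻¹) := by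
    rw [← integral_const_mul]
    congr 1
    ext θ
    rw [div_eq_mul_inv]
    congr 2
    ring
  have hPpos : 0 < Real.sqrt ((w + w') ^ 2 + c ^ 2) := Real.sqrt_pos.mpr (by positivity)
  have hMpos : 0 < Real.sqrt ((w - w') ^ 2 + c ^ 2) := Real.sqrt_pos.mpr hne
  have hval : (∫ ϑ in Set.Ioo (0 : ℝ) π,
      Real.sqrt (w * w') / (w ^ 2 + w' ^ 2 - 2 * w * w' * Real.cos ϑ + c ^ 2))
      = π * Real.sqrt (w * w') /
        (Real.sqrt ((w + w') ^ 2 + c ^ 2) * Real.sqrt ((w - w') ^ 2 + c ^ 2)) := by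
    rw [hint, key]; ring
  refine ⟨hval, ?_⟩
  rw [hval]
  have h1 : Real.sqrt (w * w') ≤ (w + w') / 2 := by
    have := Real.sqrt_le_sqrt (show w * w' ≤ ((w + w') / 2) ^ 2 by nlinarith)
    rwa [Real.sqrt_sq (by positivity)] at this
  have h2 : (w + w') / 2 ≤ Real.sqrt ((w + w') ^ 2 + c ^ 2) / 2 := by
    have h2' := Real.sqrt_le_sqrt (show (w + w') ^ 2 ≤ (w + w') ^ 2 + c ^ 2 by nlinarith)
    rw [Real.sqrt_sq (by positivity)] at h2'
    linarith
  calc π * Real.sqrt (w * w') /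
        (Real.sqrt ((w + w') ^ 2 + c ^ 2) * Real.sqrt ((w - w') ^ 2 + c ^ 2))
      ≤ π * (Real.sqrt ((w + w') ^ 2 + c ^ 2) / 2) /
        (Real.sqrt ((w + w') ^ 2 + c ^ 2) * Real.sqrt ((w - w') ^ 2 + c ^ 2)) := by
        gcongr
        linarith
    _ = (π / 2) * (Real.sqrt ((w - w') ^ 2 + c ^ 2))⁻¹ := by
        field_simp
end
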